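/- arXiv:0912.3999 — 3 statements merged into one kernel-verified Lean document; each statement's English description precedes it below -/
import Mathlib

section
/- Fix a real α > −1. For every μ > 0 there exist positive constants C = C(μ) and Ω = Ω(μ) such that for every integer N ≥ 1 and every z ∈ ℂ with Re z ≥ 0 and Im z ≥ μ, both |h_N(4Nz)| ≤ C · N^{−(α+1)/2} · Ω^N · |z|^{N+1/2} and |h_{N−1}(4Nz)| ≤ C · N^{−(α+1)/2} · Ω^{N−1} · |z|^{N−1/2} hold. (Uniform upper bounds for the orthonormal Laguerre-type polynomials in the upper half plane.) -/
open MeasureTheory Filter Topology Finset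
open scoped Real Classical

noncomputable section

namespace RMT

/-- Extend a finite tuple by zero. -/
def extFun {n : ℕ} (t : Fin n → ℝ) : ℕ → ℝ := fun k => if h : k < n then t ⟨k, h⟩ else 0

/-- Squared Vandermonde determinant ∏_{i<j} (x_j - x_i)². -/
def vdm2 {N : ℕ} (x : Fin N → ℝ) : ℝ :=
  ∏ p ∈ Finset.univ.filter (fun p : Fin N × Fin N => p.1 < p.2), (x p.2 - x p.1) ^ 2

/-- Laguerre weight ∏ xᵢ^α (real power). -/
def lagWeight (α : ℝ) {N : ℕ} (x : Fin N → ℝ) : ℝ := ∏ i, x i ^ α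

/-- Partition function of the fixed trace LUE:
`Z_δ^r = r^{N(N+α)} ∏_{j=1}^N Γ(1+j)Γ(α+j) / Γ(N(N+α))`. -/
def ftlueZ (α : ℝ) (N : ℕ) (r : ℝ) : ℝ :=
  r ^ ((N : ℝ) * ((N : ℝ) + α)) *
    (∏ j ∈ Finset.range N, Real.Gamma (1 + ((j : ℝ) + 1)) * Real.Gamma (α + ((j : ℝ) + 1))) /
      Real.Gamma ((N : ℝ) * ((N : ℝ) + α))

/-- The full eigenvalue vector for the fixed trace LUE: the first `n` coordinates are the fixed
arguments `t`, the next `N-1-n` coordinates are the integration variables `y`, and the last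
coordinate is `r - ∑ t - ∑ y`. -/
def ftlueVec (N n : ℕ) (r : ℝ) (t : Fin n → ℝ) (y : Fin (N - 1 - n) → ℝ) : Fin N → ℝ :=
  fun i =>
    if (i : ℕ) < n then extFun t (i : ℕ)
    else if (i : ℕ) < N - 1 then extFun y ((i : ℕ) - n)
    else r - (∑ j, t j) - (∑ k, y k)

/-- `n`-point correlation function of the fixed trace LUE (FTLUE) with trace `r`. -/
def ftlueR (α : ℝ) (N n : ℕ) (r : ℝ) (t : Fin n → ℝ) : ℝ :=
  if (∀ i, 0 ≤ t i) ∧ (∑ i, t i) ≤ r then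
    ((N.factorial : ℝ) / ((N - n).factorial : ℝ)) / ftlueZ α N r *
      ∫ y : Fin (N - 1 - n) → ℝ,
        (if (∀ k, 0 ≤ y k) ∧ (∑ i, t i) + (∑ k, y k) ≤ r then
          vdm2 (ftlueVec N n r t y) * lagWeight α (ftlueVec N n r t y) else 0)
  else 0

/-- Full eigenvalue vector for ensembles where all of `x_{n+1},…,x_N` are integrated. -/
def fullVec (N n : ℕ) (t : Fin n → ℝ) (y : Fin (N - n) → ℝ) : Fin N → ℝ :=
  fun i => if (i : ℕ) < n then extFun t (i : ℕ) else extFun y ((i : ℕ) - n)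

/-- Partition function of the bounded trace LUE. -/
def btlueZ (α : ℝ) (N : ℕ) (r : ℝ) : ℝ :=
  ∫ x : Fin N → ℝ,
    (if (∀ i, 0 ≤ x i) ∧ (∑ i, x i) ≤ r then vdm2 x * lagWeight α x else 0)

/-- `n`-point correlation function of the bounded trace LUE (BTLUE). -/
def btlueR (α : ℝ) (N n : ℕ) (r : ℝ) (t : Fin n → ℝ) : ℝ :=
  if ∀ i, 0 ≤ t i then
    ((N.factorial : ℝ) / ((N - n).factorial : ℝ)) / btlueZ α N r *
      ∫ y : Fin (N - n) → ℝ,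
        (if (∀ k, 0 ≤ y k) ∧ (∑ i, t i) + (∑ k, y k) ≤ r then
          vdm2 (fullVec N n t y) * lagWeight α (fullVec N n t y) else 0)
  else 0

/-- Partition function of the LUE with scale `s`. -/
def lueZ (α : ℝ) (N : ℕ) (s : ℝ) : ℝ :=
  s ^ ((N : ℝ) * ((N : ℝ) + α)) *
    ∏ j ∈ Finset.range N, Real.Gamma (1 + ((j : ℝ) + 1)) * Real.Gamma (α + ((j : ℝ) + 1))

/-- Joint eigenvalue density of the LUE with scale `s`. -/
def luePdf (α : ℝ) (N : ℕ) (s : ℝ) (x : Fin N → ℝ) : ℝ :=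
  if ∀ i, 0 ≤ x i then
    (1 / lueZ α N s) * vdm2 x * ∏ i, x i ^ α * Real.exp (-(x i) / s)
  else 0

/-- `n`-point correlation function of the LUE with scale `s`. -/
def lueR (α : ℝ) (N n : ℕ) (s : ℝ) (t : Fin n → ℝ) : ℝ :=
  ((N.factorial : ℝ) / ((N - n).factorial : ℝ)) *
    ∫ y : Fin (N - n) → ℝ,
      (if ∀ k, 0 ≤ y k then luePdf α N s (fullVec N n t y) else 0)

/-- Gamma(N(N+α),1) density. -/
def gammaDens (α : ℝ) (N : ℕ) (x : ℝ) : ℝ :=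
  if 0 ≤ x then
    Real.exp (-x) * x ^ ((N : ℝ) * ((N : ℝ) + α) - 1) / Real.Gamma ((N : ℝ) * ((N : ℝ) + α))
  else 0

/-- Sine kernel. -/
def Ksin (u v : ℝ) : ℝ :=
  if u = v then 1 else Real.sin (π * (u - v)) / (π * (u - v))

/-- Marchenko–Pastur density. -/
def psiMP (x : ℝ) : ℝ :=
  if 0 < x ∧ x ≤ 1 then (2 / π) * Real.sqrt ((1 - x) / x) else 0

/-- Airy function, as a convergent improper integral. -/
def Ai (x : ℝ) : ℝ :=
  limUnder atTop (fun T : ℝ => (1 / π) * ∫ t in (0 : ℝ)..T, Real.cos (t ^ 3 / 3 + x * t))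

/-- Airy kernel. -/
def KAiry (u v : ℝ) : ℝ :=
  if u = v then (deriv Ai u) ^ 2 - u * (Ai u) ^ 2
  else (deriv Ai u * Ai v - deriv Ai v * Ai u) / (u - v)

/-- Bessel function of the first kind of (real) index `α`, as a power series. -/
def besselJ (α : ℝ) (x : ℝ) : ℝ :=
  ∑' m : ℕ,
    ((-1 : ℝ) ^ m / ((m.factorial : ℝ) * Real.Gamma ((m : ℝ) + α + 1))) *
      (x / 2) ^ (2 * (m : ℝ) + α)

/-- Bessel kernel off the diagonal. -/
def KBesselOff (α : ℝ) (u v : ℝ) : ℝ :=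
  (besselJ α (Real.sqrt u) * Real.sqrt v * deriv (besselJ α) (Real.sqrt v) -
      besselJ α (Real.sqrt v) * Real.sqrt u * deriv (besselJ α) (Real.sqrt u)) /
    (2 * (u - v))

/-- Bessel kernel, extended to the diagonal by its limiting value. -/
def KBessel (α : ℝ) (u v : ℝ) : ℝ :=
  if u = v then limUnder (𝓝[≠] u) (fun w => KBesselOff α u w) else KBesselOff α u v

/-- Orthonormal polynomials for the weight `x^α e^{-x}` on `(0,∞)`, at complex arguments. -/
def hkC (α : ℝ) (k : ℕ) (z : ℂ) : ℂ :=
  (Real.sqrt (Real.Gamma ((k : ℝ) + 1) / Real.Gamma ((k : ℝ) + α + 1)) : ℂ) *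
    ∑ j ∈ Finset.range (k + 1),
      (-1 : ℂ) ^ (k - j) *
        ((Real.Gamma ((k : ℝ) + α + 1) /
            (Real.Gamma ((j : ℝ) + α + 1) * ((k - j).factorial : ℝ) * (j.factorial : ℝ)) : ℝ) : ℂ) *
        z ^ j

/-- `φ_k(z) = z^{α/2} e^{-z/2} h_k(z)` (principal branch). -/
def phikC (α : ℝ) (k : ℕ) (z : ℂ) : ℂ :=
  z ^ ((α : ℂ) / 2) * Complex.exp (-z / 2) * hkC α k z

/-- Correlation kernel `K_N(z,w) = ∑_{k<N} φ_k(z) φ_k(w)`. -/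
def KNC (α : ℝ) (N : ℕ) (z w : ℂ) : ℂ := ∑ k ∈ Finset.range N, phikC α k z * phikC α k w

/-- Rescaled kernel `K̃_N(z,w,s) = s⁻¹ K_N(z/s, w/s)`. -/
def KNS (α : ℝ) (N : ℕ) (z w s : ℂ) : ℂ := s⁻¹ * KNC α N (z / s) (w / s)

/-- `Λ(H) = 1 + iH`. -/
def Lam (H : ℝ) : ℂ := 1 + Complex.I * (H : ℂ)

/-- Analytic continuation `ψ̂` of the Marchenko–Pastur density to the upper half plane,
with boundary values `ψ` on the reals. -/
def psihat (z : ℂ) : ℂ :=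
  if z.im = 0 then (psiMP z.re : ℂ)
  else (2 / (Complex.I * (π : ℂ))) * (z - 1) ^ ((1 : ℂ) / 2) / z ^ ((1 : ℂ) / 2)

/-- Characteristic function `φ_N(y) = e^{iy(N+α)} (1+iy/N)^{-N(N+α)}` (principal branch). -/
def phiN (α : ℝ) (N : ℕ) (y : ℝ) : ℂ :=
  Complex.exp (Complex.I * (y : ℂ) * (((N : ℝ) + α : ℝ) : ℂ)) *
    (1 + Complex.I * (y : ℂ) / (N : ℂ)) ^ (-((((N : ℝ) * ((N : ℝ) + α) : ℝ) : ℂ)))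

end RMT

namespace RMT

variable {α : ℝ}

lemma gamma_lb (hα : -1 < α) (k : ℕ) :
    Real.Gamma (α + 2) * k.factorial ≤ Real.Gamma ((k : ℝ) + 1 + α + 1) := by
  induction k with
  | zero =>
    rw [show ((0 : ℕ) : ℝ) + 1 + α + 1 = α + 2 by push_cast; ring]
    simp
  | succ k ih =>
    have hk0 : (0 : ℝ) ≤ (k : ℝ) := k.cast_nonneg
    have hpos : (0 : ℝ) < (k : ℝ) + 1 + α + 1 := by linarith
    have h1 : Real.Gamma (((k + 1 : ℕ) : ℝ) + 1 + α + 1)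
        = ((k : ℝ) + 1 + α + 1) * Real.Gamma ((k : ℝ) + 1 + α + 1) := by
      rw [show ((k + 1 : ℕ) : ℝ) + 1 + α + 1 = ((k : ℝ) + 1 + α + 1) + 1 by push_cast; ring]
      exact Real.Gamma_add_one hpos.ne'
    have hG : 0 < Real.Gamma ((k : ℝ) + 1 + α + 1) := Real.Gamma_pos_of_pos hpos
    have hG2 : 0 < Real.Gamma (α + 2) := Real.Gamma_pos_of_pos (by linarith)
    have h2 : ((k : ℝ) + 1) * (Real.Gamma (α + 2) * k.factorial)
        ≤ ((k : ℝ) + 1 + α + 1) * Real.Gamma ((k : ℝ) + 1 + α + 1) := by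
      apply mul_le_mul (by linarith) ih (mul_nonneg hG2.le (Nat.cast_nonneg _)) (by linarith)
    calc Real.Gamma (α + 2) * (k + 1).factorial
        = ((k : ℝ) + 1) * (Real.Gamma (α + 2) * k.factorial) := by
          rw [Nat.factorial_succ]; push_cast; ring
      _ ≤ _ := h2.trans_eq h1.symm

lemma ratio_lb (hα : -1 < α) (k : ℕ) :
    Real.Gamma ((k : ℝ) + 1) / Real.Gamma ((k : ℝ) + α + 1)
      ≤ ((k : ℝ) + 1) * max (1 / Real.Gamma (α + 1)) (1 / Real.Gamma (α + 2)) := by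
  have hα1 : (0 : ℝ) < α + 1 := by linarith
  have hG1 : 0 < Real.Gamma (α + 1) := Real.Gamma_pos_of_pos hα1
  have hG2 : 0 < Real.Gamma (α + 2) := Real.Gamma_pos_of_pos (by linarith)
  cases k with
  | zero =>
    rw [show ((0 : ℕ) : ℝ) + 1 = 1 by norm_num, show ((0 : ℕ) : ℝ) + α + 1 = α + 1 by push_cast; ring,
      Real.Gamma_one]
    calc (1 : ℝ) / Real.Gamma (α + 1) ≤ max (1 / Real.Gamma (α + 1)) (1 / Real.Gamma (α + 2)) :=
          le_max_left _ _
      _ = 1 * _ := (one_mul _).symm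
  | succ m =>
    have hlb := gamma_lb hα m
    have hpos : (0 : ℝ) < (m : ℝ) + 1 + α + 1 := by
      have : (0:ℝ) ≤ (m:ℝ) := m.cast_nonneg; linarith
    have hGpos : 0 < Real.Gamma ((m : ℝ) + 1 + α + 1) := Real.Gamma_pos_of_pos hpos
    have heq : ((m + 1 : ℕ) : ℝ) + α + 1 = (m : ℝ) + 1 + α + 1 := by push_cast; ring
    have hnum : Real.Gamma (((m + 1 : ℕ) : ℝ) + 1) = ((m + 1).factorial : ℝ) := by
      exact_mod_cast Real.Gamma_nat_eq_factorial (m + 1)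
    rw [heq, hnum]
    have hden : 0 < Real.Gamma (α + 2) * m.factorial := by positivity
    calc ((m + 1).factorial : ℝ) / Real.Gamma ((m : ℝ) + 1 + α + 1)
        ≤ ((m + 1).factorial : ℝ) / (Real.Gamma (α + 2) * m.factorial) := by
          apply div_le_div_of_nonneg_left (by positivity) hden hlb
      _ = ((m : ℝ) + 1) / Real.Gamma (α + 2) := by
          rw [Nat.factorial_succ]; push_cast
          field_simp
      _ ≤ ((m : ℝ) + 1) * max (1 / Real.Gamma (α + 1)) (1 / Real.Gamma (α + 2)) := by
          rw [div_eq_mul_inv]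
          apply mul_le_mul_of_nonneg_left _ (by positivity)
          calc (Real.Gamma (α + 2))⁻¹ = 1 / Real.Gamma (α + 2) := (one_div _).symm
            _ ≤ _ := le_max_right _ _
      _ ≤ (((m + 1 : ℕ) : ℝ) + 1) * max (1 / Real.Gamma (α + 1)) (1 / Real.Gamma (α + 2)) := by
          apply mul_le_mul_of_nonneg_right _ (le_max_of_le_left (by positivity))
          push_cast; linarith

lemma ratio_ub (hα : -1 < α) (d j : ℕ) :
    Real.Gamma ((j : ℝ) + (d : ℝ) + α + 1)
      ≤ Real.Gamma ((j : ℝ) + α + 1) * ((j : ℝ) + (d : ℝ) + 1 + |α|) ^ d := by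
  induction d with
  | zero => simp
  | succ d ih =>
    have hj0 : (0 : ℝ) ≤ (j : ℝ) := j.cast_nonneg
    have hd0 : (0 : ℝ) ≤ (d : ℝ) := d.cast_nonneg
    have habs : α ≤ |α| := le_abs_self α
    have habs0 : 0 ≤ |α| := abs_nonneg α
    have hpos : (0 : ℝ) < (j : ℝ) + (d : ℝ) + α + 1 := by linarith
    have h1 : Real.Gamma ((j : ℝ) + ((d + 1 : ℕ) : ℝ) + α + 1)
        = ((j : ℝ) + (d : ℝ) + α + 1) * Real.Gamma ((j : ℝ) + (d : ℝ) + α + 1) := by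
      rw [show (j : ℝ) + ((d + 1 : ℕ) : ℝ) + α + 1 = ((j : ℝ) + (d : ℝ) + α + 1) + 1 by
        push_cast; ring]
      exact Real.Gamma_add_one hpos.ne'
    have hGj : 0 < Real.Gamma ((j : ℝ) + α + 1) := Real.Gamma_pos_of_pos (by linarith)
    have hB : (0 : ℝ) ≤ (j : ℝ) + (d : ℝ) + 1 + |α| := by linarith
    have hBB : (j : ℝ) + (d : ℝ) + 1 + |α| ≤ (j : ℝ) + ((d + 1 : ℕ) : ℝ) + 1 + |α| := by
      push_cast; linarith
    calc Real.Gamma ((j : ℝ) + ((d + 1 : ℕ) : ℝ) + α + 1)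
        = ((j : ℝ) + (d : ℝ) + α + 1) * Real.Gamma ((j : ℝ) + (d : ℝ) + α + 1) := h1
      _ ≤ ((j : ℝ) + ((d + 1 : ℕ) : ℝ) + 1 + |α|) *
            (Real.Gamma ((j : ℝ) + α + 1) * ((j : ℝ) + ((d + 1 : ℕ) : ℝ) + 1 + |α|) ^ d) := by
          apply mul_le_mul
          · push_cast; linarith
          · exact ih.trans (by
              apply mul_le_mul_of_nonneg_left _ hGj.le
              exact pow_le_pow_left₀ hB hBB d)
          · exact (Real.Gamma_pos_of_pos hpos).le
          · push_cast; linarith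
      _ = Real.Gamma ((j : ℝ) + α + 1) * ((j : ℝ) + ((d + 1 : ℕ) : ℝ) + 1 + |α|) ^ (d + 1) := by
          ring


lemma sum_bound (hα : -1 < α) (k : ℕ) {x : ℝ} (hx : 0 ≤ x) :
    ∑ j ∈ Finset.range (k + 1),
        Real.Gamma ((k : ℝ) + α + 1) /
            (Real.Gamma ((j : ℝ) + α + 1) * ((k - j).factorial : ℝ) * (j.factorial : ℝ)) * x ^ j
      ≤ Real.exp ((k : ℝ) + 1 + |α| + x) := by
  set D : ℝ := (k : ℝ) + 1 + |α| with hD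
  have hD0 : 0 ≤ D := by have : (0:ℝ) ≤ (k:ℝ) := k.cast_nonneg; have := abs_nonneg α; simp [hD]; linarith
  have step1 : ∑ j ∈ Finset.range (k + 1),
        Real.Gamma ((k : ℝ) + α + 1) /
            (Real.Gamma ((j : ℝ) + α + 1) * ((k - j).factorial : ℝ) * (j.factorial : ℝ)) * x ^ j
      ≤ ∑ j ∈ Finset.range (k + 1), D ^ (k - j) * x ^ j / (((k - j).factorial : ℝ) * (j.factorial : ℝ)) := by
    apply Finset.sum_le_sum
    intro j hj
    have hjk : j ≤ k := Nat.lt_succ_iff.mp (Finset.mem_range.mp hj)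
    have hj0 : (0:ℝ) ≤ (j:ℝ) := j.cast_nonneg
    have hGj : 0 < Real.Gamma ((j : ℝ) + α + 1) := Real.Gamma_pos_of_pos (by linarith)
    have hub := ratio_ub hα (k - j) j
    have hcast : (j : ℝ) + ((k - j : ℕ) : ℝ) = (k : ℝ) := by
      have h := (Nat.cast_sub hjk : ((k - j : ℕ) : ℝ) = (k : ℝ) - (j : ℝ)); rw [h]; ring
    rw [hcast] at hub
    rw [← hD] at hub
    have hub2 := hub
    rw [div_mul_eq_mul_div, div_le_div_iff₀ (by positivity) (by positivity)]
    have hxj : (0:ℝ) ≤ x ^ j := pow_nonneg hx j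
    calc Real.Gamma ((k : ℝ) + α + 1) * x ^ j * (((k - j).factorial : ℝ) * (j.factorial : ℝ))
        ≤ Real.Gamma ((j : ℝ) + α + 1) * D ^ (k - j) * x ^ j *
            (((k - j).factorial : ℝ) * (j.factorial : ℝ)) := by
          apply mul_le_mul_of_nonneg_right (mul_le_mul_of_nonneg_right hub2 hxj) (by positivity)
      _ = D ^ (k - j) * x ^ j *
            (Real.Gamma ((j : ℝ) + α + 1) * ((k - j).factorial : ℝ) * (j.factorial : ℝ)) := by ring
  have step2 : ∑ j ∈ Finset.range (k + 1),
        D ^ (k - j) * x ^ j / (((k - j).factorial : ℝ) * (j.factorial : ℝ))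
      = (x + D) ^ k / k.factorial := by
    rw [add_pow, Finset.sum_div]
    apply Finset.sum_congr rfl
    intro j hj
    have hjk : j ≤ k := Nat.lt_succ_iff.mp (Finset.mem_range.mp hj)
    have hfac : ((k.choose j : ℕ) : ℝ) * (j.factorial : ℝ) * ((k - j).factorial : ℝ)
        = (k.factorial : ℝ) := by
      exact_mod_cast congrArg (Nat.cast (R := ℝ)) (Nat.choose_mul_factorial_mul_factorial hjk)
    have h1 : ((k - j).factorial : ℝ) ≠ 0 := Nat.cast_ne_zero.mpr (Nat.factorial_ne_zero _)
    have h2 : (j.factorial : ℝ) ≠ 0 := Nat.cast_ne_zero.mpr (Nat.factorial_ne_zero _)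
    have h3 : (k.factorial : ℝ) ≠ 0 := Nat.cast_ne_zero.mpr (Nat.factorial_ne_zero _)
    field_simp
    linear_combination (-(x ^ j * D ^ (k - j))) * hfac
  calc _ ≤ (x + D) ^ k / k.factorial := step1.trans_eq step2
    _ ≤ Real.exp (x + D) := Real.pow_div_factorial_le_exp (x := x + D) (add_nonneg hx hD0) k
    _ = Real.exp ((k : ℝ) + 1 + |α| + x) := by rw [hD]; ring_nf

lemma hkC_abs_le (hα : -1 < α) (k : ℕ) (w : ℂ) :
    ‖hkC α k w‖
      ≤ Real.sqrt (Real.Gamma ((k : ℝ) + 1) / Real.Gamma ((k : ℝ) + α + 1)) *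
          ∑ j ∈ Finset.range (k + 1),
            Real.Gamma ((k : ℝ) + α + 1) /
                (Real.Gamma ((j : ℝ) + α + 1) * ((k - j).factorial : ℝ) * (j.factorial : ℝ)) *
              ‖w‖ ^ j := by
  unfold hkC
  rw [norm_mul, Complex.norm_real, Real.norm_of_nonneg (Real.sqrt_nonneg _)]
  apply mul_le_mul_of_nonneg_left _ (Real.sqrt_nonneg _)
  refine (norm_sum_le _ _).trans (le_of_eq (Finset.sum_congr rfl fun j hj => ?_))
  have hj0 : (0:ℝ) ≤ (j:ℝ) := j.cast_nonneg
  have hc : 0 ≤ Real.Gamma ((k : ℝ) + α + 1) /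
      (Real.Gamma ((j : ℝ) + α + 1) * ((k - j).factorial : ℝ) * (j.factorial : ℝ)) := by
    have hGk : 0 < Real.Gamma ((k : ℝ) + α + 1) :=
      Real.Gamma_pos_of_pos (by have : (0:ℝ) ≤ (k:ℝ) := k.cast_nonneg; linarith)
    have hGj : 0 < Real.Gamma ((j : ℝ) + α + 1) := Real.Gamma_pos_of_pos (by linarith)
    have f1 : (0:ℝ) < ((k - j).factorial : ℝ) := by exact_mod_cast (k - j).factorial_pos
    have f2 : (0:ℝ) < (j.factorial : ℝ) := by exact_mod_cast j.factorial_pos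
    positivity
  rw [norm_mul, norm_mul, norm_pow, norm_pow, norm_neg, norm_one, one_pow, one_mul,
    Complex.norm_real, Real.norm_of_nonneg hc]


lemma coeff_nonneg (hα : -1 < α) (k j : ℕ) :
    0 ≤ Real.Gamma ((k : ℝ) + α + 1) /
        (Real.Gamma ((j : ℝ) + α + 1) * ((k - j).factorial : ℝ) * (j.factorial : ℝ)) := by
  have hk0 : (0:ℝ) ≤ (k:ℝ) := k.cast_nonneg
  have hj0 : (0:ℝ) ≤ (j:ℝ) := j.cast_nonneg
  have hGk : 0 < Real.Gamma ((k : ℝ) + α + 1) := Real.Gamma_pos_of_pos (by linarith)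
  have hGj : 0 < Real.Gamma ((j : ℝ) + α + 1) := Real.Gamma_pos_of_pos (by linarith)
  have f1 : (0:ℝ) < ((k - j).factorial : ℝ) := by exact_mod_cast (k - j).factorial_pos
  have f2 : (0:ℝ) < (j.factorial : ℝ) := by exact_mod_cast j.factorial_pos
  positivity

lemma hk_core (hα : -1 < α) {μ : ℝ} (hμ : 0 < μ) (N k : ℕ) (hN : 1 ≤ N) (hk : k ≤ N)
    (z : ℂ) (hzμ : μ ≤ ‖z‖) :
    ‖hkC α k (4 * (N : ℂ) * z)‖ ≤
      Real.sqrt (((N : ℝ) + 1) * max (1 / Real.Gamma (α + 1)) (1 / Real.Gamma (α + 2))) *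
        (max 1 μ⁻¹ * Real.exp (6 + |α|)) ^ N * ‖z‖ ^ k := by
  have hα1 : (0:ℝ) < α + 1 := by linarith
  have hG1 : 0 < Real.Gamma (α + 1) := Real.Gamma_pos_of_pos hα1
  have hG2 : 0 < Real.Gamma (α + 2) := Real.Gamma_pos_of_pos (by linarith)
  set A₁ := max (1 / Real.Gamma (α + 1)) (1 / Real.Gamma (α + 2)) with hA₁def
  have hA₁ : 0 < A₁ := lt_max_of_lt_left (by positivity)
  set M := max 1 μ⁻¹ with hMdef
  have hM1 : (1:ℝ) ≤ M := le_max_left _ _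
  have hMμ : μ⁻¹ ≤ M := le_max_right _ _
  have hM0 : (0:ℝ) ≤ M := by linarith
  have hz0 : (0:ℝ) < ‖z‖ := lt_of_lt_of_le hμ hzμ
  have hN1 : (1:ℝ) ≤ (N:ℝ) := by exact_mod_cast hN
  have hkN : (k:ℝ) ≤ (N:ℝ) := by exact_mod_cast hk
  have habsw : ‖4 * (N : ℂ) * z‖ = 4 * (N:ℝ) * ‖z‖ := by
    rw [norm_mul, norm_mul, Complex.norm_natCast]
    norm_num
  have hzj : ∀ j, j ≤ k → ‖z‖ ^ j ≤ M ^ N * ‖z‖ ^ k := by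
    intro j hjk
    have e1 : ‖z‖ ^ j * μ ^ (k - j) ≤ ‖z‖ ^ k := by
      have e0 : ‖z‖ ^ k = ‖z‖ ^ j * ‖z‖ ^ (k - j) := by
        rw [← pow_add, Nat.add_sub_cancel' hjk]
      rw [e0]
      exact mul_le_mul_of_nonneg_left (pow_le_pow_left₀ hμ.le hzμ _) (by positivity)
    calc ‖z‖ ^ j
        = (‖z‖ ^ j * μ ^ (k - j)) * (μ⁻¹) ^ (k - j) := by
          rw [mul_assoc, ← mul_pow, mul_inv_cancel₀ hμ.ne', one_pow, mul_one]
      _ ≤ ‖z‖ ^ k * M ^ N := by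
          apply mul_le_mul e1 ?_ (by positivity) (by positivity)
          calc (μ⁻¹) ^ (k - j) ≤ M ^ (k - j) := pow_le_pow_left₀ (by positivity) hMμ _
            _ ≤ M ^ N := pow_le_pow_right₀ hM1 (le_trans (Nat.sub_le k j) hk)
      _ = M ^ N * ‖z‖ ^ k := mul_comm _ _
  have hsum : ∑ j ∈ Finset.range (k + 1),
        Real.Gamma ((k : ℝ) + α + 1) /
            (Real.Gamma ((j : ℝ) + α + 1) * ((k - j).factorial : ℝ) * (j.factorial : ℝ)) *
          ‖4 * (N : ℂ) * z‖ ^ j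
      ≤ (M ^ N * ‖z‖ ^ k) * Real.exp ((k:ℝ) + 1 + |α| + 4 * (N:ℝ)) := by
    calc ∑ j ∈ Finset.range (k + 1),
          Real.Gamma ((k : ℝ) + α + 1) /
              (Real.Gamma ((j : ℝ) + α + 1) * ((k - j).factorial : ℝ) * (j.factorial : ℝ)) *
            ‖4 * (N : ℂ) * z‖ ^ j
        ≤ ∑ j ∈ Finset.range (k + 1), (M ^ N * ‖z‖ ^ k) *
            (Real.Gamma ((k : ℝ) + α + 1) /
              (Real.Gamma ((j : ℝ) + α + 1) * ((k - j).factorial : ℝ) * (j.factorial : ℝ)) *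
              (4 * (N:ℝ)) ^ j) := by
          apply Finset.sum_le_sum
          intro j hj
          have hjk : j ≤ k := Nat.lt_succ_iff.mp (Finset.mem_range.mp hj)
          have hc := coeff_nonneg hα k j
          rw [habsw, show (4 * (N:ℝ) * ‖z‖) ^ j = (4 * (N:ℝ)) ^ j * ‖z‖ ^ j
            from mul_pow _ _ j]
          calc Real.Gamma ((k : ℝ) + α + 1) /
                (Real.Gamma ((j : ℝ) + α + 1) * ((k - j).factorial : ℝ) * (j.factorial : ℝ)) *
                ((4 * (N:ℝ)) ^ j * ‖z‖ ^ j)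
              ≤ Real.Gamma ((k : ℝ) + α + 1) /
                (Real.Gamma ((j : ℝ) + α + 1) * ((k - j).factorial : ℝ) * (j.factorial : ℝ)) *
                ((4 * (N:ℝ)) ^ j * (M ^ N * ‖z‖ ^ k)) := by
                apply mul_le_mul_of_nonneg_left
                  (mul_le_mul_of_nonneg_left (hzj j hjk) (by positivity)) hc
            _ = (M ^ N * ‖z‖ ^ k) *
                (Real.Gamma ((k : ℝ) + α + 1) /
                  (Real.Gamma ((j : ℝ) + α + 1) * ((k - j).factorial : ℝ) * (j.factorial : ℝ)) *
                  (4 * (N:ℝ)) ^ j) := by ring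
      _ = (M ^ N * ‖z‖ ^ k) * ∑ j ∈ Finset.range (k + 1),
            Real.Gamma ((k : ℝ) + α + 1) /
              (Real.Gamma ((j : ℝ) + α + 1) * ((k - j).factorial : ℝ) * (j.factorial : ℝ)) *
              (4 * (N:ℝ)) ^ j := by rw [Finset.mul_sum]
      _ ≤ (M ^ N * ‖z‖ ^ k) * Real.exp ((k:ℝ) + 1 + |α| + 4 * (N:ℝ)) := by
          apply mul_le_mul_of_nonneg_left (sum_bound hα k (by positivity)) (by positivity)
  have hexp : Real.exp ((k:ℝ) + 1 + |α| + 4 * (N:ℝ)) ≤ (Real.exp (6 + |α|)) ^ N := by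
    rw [← Real.exp_nat_mul]
    apply Real.exp_le_exp.mpr
    nlinarith [abs_nonneg α]
  have hsqrt : Real.sqrt (Real.Gamma ((k : ℝ) + 1) / Real.Gamma ((k : ℝ) + α + 1))
      ≤ Real.sqrt (((N:ℝ) + 1) * A₁) := by
    apply Real.sqrt_le_sqrt
    refine (ratio_lb hα k).trans ?_
    apply mul_le_mul_of_nonneg_right (by linarith) hA₁.le
  have hSnn : 0 ≤ ∑ j ∈ Finset.range (k + 1),
      Real.Gamma ((k : ℝ) + α + 1) /
          (Real.Gamma ((j : ℝ) + α + 1) * ((k - j).factorial : ℝ) * (j.factorial : ℝ)) *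
        ‖4 * (N : ℂ) * z‖ ^ j := by
    apply Finset.sum_nonneg
    intro j hj
    exact mul_nonneg (coeff_nonneg hα k j) (by positivity)
  calc ‖hkC α k (4 * (N : ℂ) * z)‖
      ≤ Real.sqrt (Real.Gamma ((k : ℝ) + 1) / Real.Gamma ((k : ℝ) + α + 1)) *
          ∑ j ∈ Finset.range (k + 1),
            Real.Gamma ((k : ℝ) + α + 1) /
                (Real.Gamma ((j : ℝ) + α + 1) * ((k - j).factorial : ℝ) * (j.factorial : ℝ)) *
              ‖4 * (N : ℂ) * z‖ ^ j := hkC_abs_le hα k _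
    _ ≤ Real.sqrt (((N:ℝ) + 1) * A₁) *
          ((M ^ N * ‖z‖ ^ k) * (Real.exp (6 + |α|)) ^ N) := by
        apply mul_le_mul hsqrt ?_ hSnn (Real.sqrt_nonneg _)
        exact hsum.trans (mul_le_mul_of_nonneg_left hexp (by positivity))
    _ = Real.sqrt (((N:ℝ) + 1) * A₁) * (M * Real.exp (6 + |α|)) ^ N * ‖z‖ ^ k := by
        rw [mul_pow]; ring

lemma twoK {p : ℝ} (hp : 0 < p) (N : ℕ) :
    ((N:ℝ) + 1) ^ p ≤ (2 * Real.exp (p * Real.log (p / Real.log 2))) * 2 ^ N := by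
  set a := p / Real.log 2 with ha
  have hlog2 : 0 < Real.log 2 := Real.log_pos one_lt_two
  have ha0 : 0 < a := div_pos hp hlog2
  have hx : (0:ℝ) < (N:ℝ) + 1 := by positivity
  have h1 : Real.log (((N:ℝ) + 1) / a) ≤ ((N:ℝ) + 1) / a - 1 :=
    Real.log_le_sub_one_of_pos (by positivity)
  have h2 : Real.log ((N:ℝ) + 1) ≤ ((N:ℝ) + 1) / a + Real.log a := by
    rw [Real.log_div hx.ne' ha0.ne'] at h1; linarith
  have hpa : p / a = Real.log 2 := by rw [ha]; field_simp
  have h3 : p * Real.log ((N:ℝ) + 1) ≤ ((N:ℝ) + 1) * Real.log 2 + p * Real.log a := by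
    calc p * Real.log ((N:ℝ) + 1) ≤ p * (((N:ℝ) + 1) / a + Real.log a) :=
          mul_le_mul_of_nonneg_left h2 hp.le
      _ = ((N:ℝ) + 1) * (p / a) + p * Real.log a := by field_simp
      _ = _ := by rw [hpa]
  have h4 : Real.exp (((N:ℝ) + 1) * Real.log 2) = 2 ^ (N + 1) := by
    rw [show ((N:ℝ) + 1) * Real.log 2 = ((N + 1 : ℕ) : ℝ) * Real.log 2 by push_cast; ring,
      Real.exp_nat_mul, Real.exp_log two_pos]
  calc ((N:ℝ) + 1) ^ p = Real.exp (Real.log ((N:ℝ) + 1) * p) := Real.rpow_def_of_pos hx p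
    _ ≤ Real.exp (((N:ℝ) + 1) * Real.log 2 + p * Real.log a) :=
        Real.exp_le_exp.mpr (by nlinarith)
    _ = Real.exp (((N:ℝ) + 1) * Real.log 2) * Real.exp (p * Real.log a) := Real.exp_add _ _
    _ = 2 ^ (N + 1) * Real.exp (p * Real.log a) := by rw [h4]
    _ = (2 * Real.exp (p * Real.log a)) * 2 ^ N := by rw [pow_succ]; ring

lemma keyK (hα : -1 < α) :
    ∃ K > (0:ℝ), ∀ N : ℕ, 1 ≤ N →
      Real.sqrt ((N:ℝ) + 1) * (N:ℝ) ^ ((α + 1) / 2) ≤ K * 2 ^ N := by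
  have habs : α ≤ |α| := le_abs_self α
  have habs0 : 0 ≤ |α| := abs_nonneg α
  set p : ℝ := |α| / 2 + 2 with hp'
  have hp : 0 < p := by positivity
  refine ⟨2 * Real.exp (p * Real.log (p / Real.log 2)), by positivity, fun N hN => ?_⟩
  have hN1 : (1:ℝ) ≤ (N:ℝ) := by exact_mod_cast hN
  have hx1 : (1:ℝ) ≤ (N:ℝ) + 1 := by linarith
  have h2 : (N:ℝ) ^ ((α + 1) / 2) ≤ ((N:ℝ) + 1) ^ ((|α| + 1) / 2) := by
    calc (N:ℝ) ^ ((α + 1) / 2) ≤ ((N:ℝ) + 1) ^ ((α + 1) / 2) :=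
          Real.rpow_le_rpow (by linarith) (by linarith) (by linarith)
      _ ≤ ((N:ℝ) + 1) ^ ((|α| + 1) / 2) :=
          Real.rpow_le_rpow_of_exponent_le hx1 (by linarith)
  calc Real.sqrt ((N:ℝ) + 1) * (N:ℝ) ^ ((α + 1) / 2)
      ≤ ((N:ℝ) + 1) ^ ((1:ℝ) / 2) * ((N:ℝ) + 1) ^ ((|α| + 1) / 2) := by
        rw [← Real.sqrt_eq_rpow]
        exact mul_le_mul_of_nonneg_left h2 (Real.sqrt_nonneg _)
    _ = ((N:ℝ) + 1) ^ ((1:ℝ) / 2 + (|α| + 1) / 2) := (Real.rpow_add (by linarith) _ _).symm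
    _ ≤ ((N:ℝ) + 1) ^ p := Real.rpow_le_rpow_of_exponent_le hx1 (by rw [hp']; linarith)
    _ ≤ _ := twoK hp N



/-- uniform upper bounds for the orthonormal Laguerre-type polynomials in the
upper half plane. -/
theorem hk_upper_bound (α : ℝ) (hα : -1 < α) (μ : ℝ) (hμ : 0 < μ) :
    ∃ C > (0 : ℝ), ∃ Ω > (0 : ℝ), ∀ N : ℕ, 1 ≤ N →
      ∀ z : ℂ, 0 ≤ z.re → μ ≤ z.im →
        ‖hkC α N (4 * (N : ℂ) * z)‖ ≤
            C * (N : ℝ) ^ (-(α + 1) / 2) * Ω ^ N * ‖z‖ ^ ((N : ℝ) + 1 / 2) ∧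
          ‖hkC α (N - 1) (4 * (N : ℂ) * z)‖ ≤
            C * (N : ℝ) ^ (-(α + 1) / 2) * Ω ^ (N - 1) * ‖z‖ ^ ((N : ℝ) - 1 / 2) := by
  have hα1 : (0:ℝ) < α + 1 := by linarith
  have hG1 : 0 < Real.Gamma (α + 1) := Real.Gamma_pos_of_pos hα1
  have hG2 : 0 < Real.Gamma (α + 2) := Real.Gamma_pos_of_pos (by linarith)
  set A₁ := max (1 / Real.Gamma (α + 1)) (1 / Real.Gamma (α + 2)) with hA₁def
  have hA₁ : 0 < A₁ := lt_max_of_lt_left (by positivity)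
  have hsqA : 0 < Real.sqrt A₁ := Real.sqrt_pos.mpr hA₁
  set M := max 1 μ⁻¹ with hMdef
  have hM1 : (1:ℝ) ≤ M := le_max_left _ _
  set E := Real.exp (6 + |α|) with hEdef
  have hE1 : (1:ℝ) ≤ E := Real.one_le_exp (by positivity)
  have hME1 : (1:ℝ) ≤ M * E := by nlinarith
  have hME0 : (0:ℝ) < M * E := by linarith
  set Ω := 2 * (M * E) with hΩdef
  have hΩ1 : (1:ℝ) ≤ Ω := by nlinarith
  have hΩ0 : (0:ℝ) < Ω := by linarith
  set s := (Real.sqrt μ)⁻¹ with hsdef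
  have hsqμ : 0 < Real.sqrt μ := Real.sqrt_pos.mpr hμ
  have hs0 : 0 < s := by positivity
  obtain ⟨K, hK0, hK⟩ := keyK (α := α) hα
  set X := Real.sqrt A₁ * s * K with hXdef
  have hX0 : 0 < X := by positivity
  refine ⟨Ω * X, by positivity, Ω, hΩ0, ?_⟩
  intro N hN z hre him
  have hzμ : μ ≤ ‖z‖ := le_trans him ((le_abs_self _).trans (Complex.abs_im_le_norm z))
  have hz0 : (0:ℝ) < ‖z‖ := hμ.trans_le hzμ
  have hN0 : (0:ℝ) < (N:ℝ) := by exact_mod_cast hN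
  have hNrpow : (N:ℝ) ^ ((α + 1) / 2) * (N:ℝ) ^ (-(α + 1) / 2) = 1 := by
    rw [← Real.rpow_add hN0, show (α + 1) / 2 + -(α + 1) / 2 = 0 by ring, Real.rpow_zero]
  have hNneg0 : (0:ℝ) ≤ (N:ℝ) ^ (-(α + 1) / 2) := Real.rpow_nonneg hN0.le _
  -- master inequality
  have master : Real.sqrt (((N:ℝ) + 1) * A₁) * (M * E) ^ N * s
      ≤ X * ((N:ℝ) ^ (-(α + 1) / 2) * Ω ^ N) := by
    have h1 : Real.sqrt (((N:ℝ) + 1) * A₁) = Real.sqrt ((N:ℝ) + 1) * Real.sqrt A₁ :=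
      Real.sqrt_mul (by positivity) _
    have h2 : Ω ^ N = 2 ^ N * (M * E) ^ N := by rw [hΩdef, mul_pow]
    have h3 : Real.sqrt ((N:ℝ) + 1) ≤ K * ((N:ℝ) ^ (-(α + 1) / 2) * 2 ^ N) := by
      have h5 := hK N hN
      calc Real.sqrt ((N:ℝ) + 1)
          = (Real.sqrt ((N:ℝ) + 1) * (N:ℝ) ^ ((α + 1) / 2)) * (N:ℝ) ^ (-(α + 1) / 2) := by
            rw [mul_assoc, hNrpow, mul_one]
        _ ≤ (K * 2 ^ N) * (N:ℝ) ^ (-(α + 1) / 2) := mul_le_mul_of_nonneg_right h5 hNneg0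
        _ = K * ((N:ℝ) ^ (-(α + 1) / 2) * 2 ^ N) := by ring
    calc Real.sqrt (((N:ℝ) + 1) * A₁) * (M * E) ^ N * s
        = Real.sqrt ((N:ℝ) + 1) * (Real.sqrt A₁ * s * (M * E) ^ N) := by rw [h1]; ring
      _ ≤ (K * ((N:ℝ) ^ (-(α + 1) / 2) * 2 ^ N)) * (Real.sqrt A₁ * s * (M * E) ^ N) := by
          apply mul_le_mul_of_nonneg_right h3 (by positivity)
      _ = X * ((N:ℝ) ^ (-(α + 1) / 2) * Ω ^ N) := by rw [h2, hXdef]; ring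
  have habsneg : ‖z‖ ^ (-(1/2) : ℝ) ≤ s := by
    calc ‖z‖ ^ (-(1/2) : ℝ) ≤ μ ^ (-(1/2) : ℝ) :=
          Real.rpow_le_rpow_of_nonpos hμ hzμ (by norm_num)
      _ = s := by
          rw [Real.rpow_neg hμ.le, hsdef, Real.sqrt_eq_rpow]
  constructor
  · -- k = N
    have core1 := hk_core (α := α) hα hμ N N hN le_rfl z hzμ
    have hzN : ‖z‖ ^ N ≤ s * ‖z‖ ^ ((N:ℝ) + 1/2) := by
      have e1 : ‖z‖ ^ N = ‖z‖ ^ ((N:ℝ)) := (Real.rpow_natCast _ N).symm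
      have e3 : ‖z‖ ^ ((N:ℝ)) =
          ‖z‖ ^ ((N:ℝ) + 1/2) * ‖z‖ ^ (-(1/2) : ℝ) := by
        rw [← Real.rpow_add hz0]; congr 1; ring
      rw [e1, e3]
      calc ‖z‖ ^ ((N:ℝ) + 1/2) * ‖z‖ ^ (-(1/2) : ℝ)
          ≤ ‖z‖ ^ ((N:ℝ) + 1/2) * s :=
            mul_le_mul_of_nonneg_left habsneg (Real.rpow_nonneg hz0.le _)
        _ = s * ‖z‖ ^ ((N:ℝ) + 1/2) := mul_comm _ _
    calc ‖hkC α N (4 * (N : ℂ) * z)‖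
        ≤ Real.sqrt (((N:ℝ) + 1) * A₁) * (M * E) ^ N * ‖z‖ ^ N := core1
      _ ≤ Real.sqrt (((N:ℝ) + 1) * A₁) * (M * E) ^ N *
            (s * ‖z‖ ^ ((N:ℝ) + 1/2)) := by
          apply mul_le_mul_of_nonneg_left hzN (by positivity)
      _ = (Real.sqrt (((N:ℝ) + 1) * A₁) * (M * E) ^ N * s) * ‖z‖ ^ ((N:ℝ) + 1/2) := by
          ring
      _ ≤ (X * ((N:ℝ) ^ (-(α + 1) / 2) * Ω ^ N)) * ‖z‖ ^ ((N:ℝ) + 1/2) := by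
          apply mul_le_mul_of_nonneg_right master (Real.rpow_nonneg hz0.le _)
      _ ≤ (Ω * X) * (N:ℝ) ^ (-(α + 1) / 2) * Ω ^ N * ‖z‖ ^ ((N:ℝ) + 1/2) := by
          apply mul_le_mul_of_nonneg_right _ (Real.rpow_nonneg hz0.le _)
          calc X * ((N:ℝ) ^ (-(α + 1) / 2) * Ω ^ N)
              ≤ Ω * (X * ((N:ℝ) ^ (-(α + 1) / 2) * Ω ^ N)) := by
                apply le_mul_of_one_le_left (by positivity) hΩ1
            _ = (Ω * X) * (N:ℝ) ^ (-(α + 1) / 2) * Ω ^ N := by ring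
  · -- k = N - 1
    have core2 := hk_core (α := α) hα hμ N (N - 1) hN (Nat.sub_le N 1) z hzμ
    have hpowΩ : Ω ^ (N - 1) * Ω = Ω ^ N := by
      rw [← pow_succ, Nat.sub_add_cancel hN]
    have hzN2 : ‖z‖ ^ (N - 1) ≤ s * ‖z‖ ^ ((N:ℝ) - 1/2) := by
      have e1 : ‖z‖ ^ (N - 1) = ‖z‖ ^ (((N - 1 : ℕ)):ℝ) :=
        (Real.rpow_natCast _ _).symm
      have e2 : (((N - 1 : ℕ)):ℝ) = (N:ℝ) - 1 := by
        rw [Nat.cast_sub hN]; norm_num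
      have e3 : ‖z‖ ^ ((N:ℝ) - 1) =
          ‖z‖ ^ ((N:ℝ) - 1/2) * ‖z‖ ^ (-(1/2) : ℝ) := by
        rw [← Real.rpow_add hz0]; congr 1; ring
      rw [e1, e2, e3]
      calc ‖z‖ ^ ((N:ℝ) - 1/2) * ‖z‖ ^ (-(1/2) : ℝ)
          ≤ ‖z‖ ^ ((N:ℝ) - 1/2) * s :=
            mul_le_mul_of_nonneg_left habsneg (Real.rpow_nonneg hz0.le _)
        _ = s * ‖z‖ ^ ((N:ℝ) - 1/2) := mul_comm _ _
    calc ‖hkC α (N - 1) (4 * (N : ℂ) * z)‖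
        ≤ Real.sqrt (((N:ℝ) + 1) * A₁) * (M * E) ^ N * ‖z‖ ^ (N - 1) := core2
      _ ≤ Real.sqrt (((N:ℝ) + 1) * A₁) * (M * E) ^ N *
            (s * ‖z‖ ^ ((N:ℝ) - 1/2)) := by
          apply mul_le_mul_of_nonneg_left hzN2 (by positivity)
      _ = (Real.sqrt (((N:ℝ) + 1) * A₁) * (M * E) ^ N * s) * ‖z‖ ^ ((N:ℝ) - 1/2) := by
          ring
      _ ≤ (X * ((N:ℝ) ^ (-(α + 1) / 2) * Ω ^ N)) * ‖z‖ ^ ((N:ℝ) - 1/2) := by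
          apply mul_le_mul_of_nonneg_right master (Real.rpow_nonneg hz0.le _)
      _ = (Ω * X) * (N:ℝ) ^ (-(α + 1) / 2) * Ω ^ (N - 1) * ‖z‖ ^ ((N:ℝ) - 1/2) := by
          rw [← hpowΩ]; ring


end RMT
end
end

section
/- Fix a real α > −1. For every μ > 0 there exist positive constants C = C(μ) and Ω = Ω(μ) such that for every integer N with N ≥ 1/(4μ) and all complex numbers z₁, z₂ with Re z₁ > 0, Re z₂ > 0, Im z₁ ≥ μ and Im z₂ ≥ μ, one has (1/N)·| K̃_N(z₁, z₂, 1/(4N)) | ≤ C · Ω^{2N−2} · Γ(2P+1) · (Im z₁)^{P+1/2} · (Im z₂)^{P+1/2}, where P = N + ⌊(α−1)/2⌋ + 1 and ⌊·⌋ denotes the integer part. (Uniform upper bound for the rescaled LUE correlation kernel in the upper half plane.) -/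
open MeasureTheory Filter Topology Finset
open scoped Real Classical

noncomputable section

namespace RMT



private lemma aux_pow_le_exp (x : ℝ) (hx : 0 ≤ x) (i : ℕ) :
    x ^ i ≤ 2 ^ i * i.factorial * Real.exp (x / 2) := by
  have h1 : (x / 2) ^ i / i.factorial ≤ Real.exp (x / 2) := by
    calc (x / 2) ^ i / i.factorial
        ≤ ∑ n ∈ Finset.range (i + 1), (x / 2) ^ n / n.factorial :=
          Finset.single_le_sum (f := fun n => (x / 2) ^ n / n.factorial)
            (fun n _ => by positivity) (Finset.self_mem_range_succ i)
      _ ≤ Real.exp (x / 2) := Real.sum_le_exp_of_nonneg (by positivity) _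
  have h2 : x ^ i = 2 ^ i * (x / 2) ^ i := by
    rw [← mul_pow]; ring_nf
  have hfac : (0:ℝ) < i.factorial := by positivity
  rw [h2, mul_assoc]
  have h3 : (x / 2) ^ i ≤ (i.factorial : ℝ) * Real.exp (x / 2) := by
    rw [div_le_iff₀ hfac] at h1
    linarith [h1]
  exact mul_le_mul_of_nonneg_left h3 (by positivity)

private lemma aux_addpow_exp (x y : ℝ) (hx : 0 ≤ x) (hy : 1 ≤ y) (n : ℕ) :
    (x + y) ^ n * Real.exp (-(x / 2)) ≤ 2 ^ (n + 1) * n.factorial * y ^ n := by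
  have hy0 : (0:ℝ) ≤ y := by linarith
  have key : ∀ i ∈ Finset.range (n + 1),
      x ^ i * y ^ (n - i) * (n.choose i : ℝ) * Real.exp (-(x / 2))
        ≤ 2 ^ i * (n.factorial : ℝ) * y ^ n := by
    intro i hi
    have hi' : i ≤ n := Nat.lt_succ_iff.mp (Finset.mem_range.mp hi)
    have h1 : x ^ i * Real.exp (-(x / 2)) ≤ 2 ^ i * i.factorial := by
      have h := mul_le_mul_of_nonneg_right (aux_pow_le_exp x hx i)
        (Real.exp_nonneg (-(x / 2)))
      calc x ^ i * Real.exp (-(x / 2)) ≤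
          2 ^ i * i.factorial * Real.exp (x / 2) * Real.exp (-(x / 2)) := h
        _ = 2 ^ i * i.factorial * (Real.exp (x / 2) * Real.exp (-(x / 2))) := by ring
        _ = 2 ^ i * i.factorial := by
            rw [← Real.exp_add]; simp
    have h2 : y ^ (n - i) ≤ y ^ n := pow_le_pow_right₀ hy (Nat.sub_le n i)
    have h3 : (n.choose i : ℝ) * i.factorial ≤ n.factorial := by
      have := Nat.choose_mul_factorial_mul_factorial hi'
      have h4 : n.choose i * i.factorial ≤ n.factorial := by
        calc n.choose i * i.factorial ≤ n.choose i * i.factorial * (n - i).factorial :=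
              Nat.le_mul_of_pos_right _ (Nat.factorial_pos _)
          _ = n.factorial := this
      exact_mod_cast h4
    calc x ^ i * y ^ (n - i) * (n.choose i : ℝ) * Real.exp (-(x / 2))
        = (x ^ i * Real.exp (-(x / 2))) * (n.choose i : ℝ) * y ^ (n - i) := by ring
      _ ≤ (2 ^ i * i.factorial) * (n.choose i : ℝ) * y ^ n := by
          have hxi : (0:ℝ) ≤ x ^ i * Real.exp (-(x / 2)) := by positivity
          have := mul_le_mul h1 h2 (by positivity) (by positivity)
          calc (x ^ i * Real.exp (-(x / 2))) * (n.choose i : ℝ) * y ^ (n - i)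
              = (x ^ i * Real.exp (-(x / 2))) * y ^ (n - i) * (n.choose i : ℝ) := by ring
            _ ≤ (2 ^ i * i.factorial) * y ^ n * (n.choose i : ℝ) := by
                exact mul_le_mul_of_nonneg_right this (by positivity)
            _ = (2 ^ i * i.factorial) * (n.choose i : ℝ) * y ^ n := by ring
      _ ≤ 2 ^ i * (n.factorial : ℝ) * y ^ n := by
          have : (i.factorial : ℝ) * (n.choose i : ℝ) ≤ n.factorial := by
            rw [mul_comm]; exact h3
          calc (2:ℝ) ^ i * i.factorial * (n.choose i : ℝ) * y ^ n
              = 2 ^ i * ((i.factorial : ℝ) * (n.choose i : ℝ)) * y ^ n := by ring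
            _ ≤ 2 ^ i * (n.factorial : ℝ) * y ^ n := by gcongr
  calc (x + y) ^ n * Real.exp (-(x / 2))
      = (∑ i ∈ Finset.range (n + 1), x ^ i * y ^ (n - i) * (n.choose i : ℝ)) *
          Real.exp (-(x / 2)) := by rw [add_pow]
    _ = ∑ i ∈ Finset.range (n + 1),
          x ^ i * y ^ (n - i) * (n.choose i : ℝ) * Real.exp (-(x / 2)) := by
        rw [Finset.sum_mul]
    _ ≤ ∑ i ∈ Finset.range (n + 1), 2 ^ i * (n.factorial : ℝ) * y ^ n :=
        Finset.sum_le_sum key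
    _ = (∑ i ∈ Finset.range (n + 1), (2:ℝ) ^ i) * (n.factorial : ℝ) * y ^ n := by
        rw [Finset.sum_mul, Finset.sum_mul]
    _ ≤ 2 ^ (n + 1) * (n.factorial : ℝ) * y ^ n := by
        have : ∑ i ∈ Finset.range (n + 1), (2:ℝ) ^ i ≤ 2 ^ (n + 1) := by
          rw [geom_sum_eq (by norm_num : (2:ℝ) ≠ 1)]
          have : (0:ℝ) < 2 ^ (n+1) := by positivity
          norm_num
        gcongr

private lemma gamma_lower (α : ℝ) (hα : -1 < α) (j : ℕ) :
    Real.Gamma (α + 1) * (min 1 ((α + 1) / 2)) ^ j * j.factorial ≤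
      Real.Gamma ((j : ℝ) + α + 1) := by
  have hc0 : 0 < min 1 ((α + 1) / 2) := lt_min one_pos (by linarith)
  have hc1 : min 1 ((α + 1) / 2) ≤ 1 := min_le_left _ _
  have hc2 : min 1 ((α + 1) / 2) ≤ (α + 1) / 2 := min_le_right _ _
  induction j with
  | zero => simp
  | succ n ih =>
    have hpos : (0:ℝ) < (n : ℝ) + α + 1 := by
      have : (0:ℝ) ≤ (n:ℝ) := Nat.cast_nonneg n
      linarith
    have hrec : Real.Gamma ((n : ℝ) + 1 + α + 1) =
        ((n : ℝ) + α + 1) * Real.Gamma ((n : ℝ) + α + 1) := by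
      have := Real.Gamma_add_one (s := (n : ℝ) + α + 1) (ne_of_gt hpos)
      calc Real.Gamma ((n : ℝ) + 1 + α + 1) = Real.Gamma (((n : ℝ) + α + 1) + 1) := by
            ring_nf
        _ = ((n : ℝ) + α + 1) * Real.Gamma ((n : ℝ) + α + 1) := this
    have hstep : min 1 ((α + 1) / 2) * ((n : ℝ) + 1) ≤ (n : ℝ) + α + 1 := by
      have hn0 : (0:ℝ) ≤ (n:ℝ) := Nat.cast_nonneg n
      nlinarith
    have hG : 0 < Real.Gamma ((n : ℝ) + α + 1) := Real.Gamma_pos_of_pos hpos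
    have hGa : 0 < Real.Gamma (α + 1) := Real.Gamma_pos_of_pos (by linarith)
    have cast1 : ((n + 1 : ℕ) : ℝ) = (n : ℝ) + 1 := by push_cast; ring
    rw [cast1, hrec]
    have hfn : ((n + 1).factorial : ℝ) = ((n : ℝ) + 1) * n.factorial := by
      rw [Nat.factorial_succ]; push_cast; ring
    rw [hfn, pow_succ]
    calc Real.Gamma (α + 1) * (min 1 ((α + 1) / 2) ^ n * min 1 ((α + 1) / 2)) *
          (((n : ℝ) + 1) * (n.factorial : ℝ))
        = (min 1 ((α + 1) / 2) * ((n : ℝ) + 1)) *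
            (Real.Gamma (α + 1) * min 1 ((α + 1) / 2) ^ n * (n.factorial : ℝ)) := by ring
      _ ≤ ((n : ℝ) + α + 1) * Real.Gamma ((n : ℝ) + α + 1) := by
          apply mul_le_mul hstep ih (by positivity)
          linarith

private lemma gamma_upper (α : ℝ) (hα : -1 < α) (j : ℕ) :
    Real.Gamma ((j : ℝ) + α + 1) ≤
      Real.Gamma (α + 1) * ((⌈α⌉₊ : ℝ) + 1) ^ j * j.factorial := by
  have hA : α ≤ (⌈α⌉₊ : ℝ) := Nat.le_ceil α
  have hA0 : (0:ℝ) ≤ (⌈α⌉₊ : ℝ) := Nat.cast_nonneg _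
  induction j with
  | zero => simp
  | succ n ih =>
    have hpos : (0:ℝ) < (n : ℝ) + α + 1 := by
      have : (0:ℝ) ≤ (n:ℝ) := Nat.cast_nonneg n
      linarith
    have hrec : Real.Gamma ((n : ℝ) + 1 + α + 1) =
        ((n : ℝ) + α + 1) * Real.Gamma ((n : ℝ) + α + 1) := by
      have := Real.Gamma_add_one (s := (n : ℝ) + α + 1) (ne_of_gt hpos)
      calc Real.Gamma ((n : ℝ) + 1 + α + 1) = Real.Gamma (((n : ℝ) + α + 1) + 1) := by
            ring_nf
        _ = ((n : ℝ) + α + 1) * Real.Gamma ((n : ℝ) + α + 1) := this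
    have hstep : (n : ℝ) + α + 1 ≤ ((⌈α⌉₊ : ℝ) + 1) * ((n : ℝ) + 1) := by
      have hn0 : (0:ℝ) ≤ (n:ℝ) := Nat.cast_nonneg n
      nlinarith
    have hG : 0 < Real.Gamma ((n : ℝ) + α + 1) := Real.Gamma_pos_of_pos hpos
    have cast1 : ((n + 1 : ℕ) : ℝ) = (n : ℝ) + 1 := by push_cast; ring
    rw [cast1, hrec]
    have hfn : ((n + 1).factorial : ℝ) = ((n : ℝ) + 1) * n.factorial := by
      rw [Nat.factorial_succ]; push_cast; ring
    rw [hfn, pow_succ]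
    calc ((n : ℝ) + α + 1) * Real.Gamma ((n : ℝ) + α + 1)
        ≤ (((⌈α⌉₊ : ℝ) + 1) * ((n : ℝ) + 1)) *
            (Real.Gamma (α + 1) * ((⌈α⌉₊ : ℝ) + 1) ^ n * (n.factorial : ℝ)) := by
          apply mul_le_mul hstep ih (le_of_lt hG) (by positivity)
      _ = Real.Gamma (α + 1) * (((⌈α⌉₊ : ℝ) + 1) ^ n * ((⌈α⌉₊ : ℝ) + 1)) *
            (((n : ℝ) + 1) * (n.factorial : ℝ)) := by ring

private lemma fact_add_le (j a : ℕ) : (j + a).factorial ≤ j.factorial * (j + a) ^ a := by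
  induction a with
  | zero => simp
  | succ n ih =>
    have h1 : (j + (n + 1)).factorial = (j + n + 1) * (j + n).factorial := by
      rw [show j + (n + 1) = (j + n) + 1 by ring, Nat.factorial_succ]
    rw [h1]
    calc (j + n + 1) * (j + n).factorial ≤ (j + n + 1) * (j.factorial * (j + n) ^ n) :=
          Nat.mul_le_mul_left _ ih
      _ ≤ (j + n + 1) * (j.factorial * (j + n + 1) ^ n) := by
          apply Nat.mul_le_mul_left
          apply Nat.mul_le_mul_left
          exact Nat.pow_le_pow_left (Nat.le_succ _) n
      _ = j.factorial * (j + n + 1) ^ (n + 1) := by ring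
      _ = j.factorial * (j + (n + 1)) ^ (n + 1) := by rw [show j + n + 1 = j + (n+1) by ring]

private lemma sqrt_pow_eq (x : ℝ) (hx : 0 ≤ x) (k : ℕ) :
    Real.sqrt (x ^ k) = Real.sqrt x ^ k := by
  induction k with
  | zero => simp
  | succ n ih => rw [pow_succ, pow_succ, Real.sqrt_mul (pow_nonneg hx n), ih]


private lemma phik_bound (α : ℝ) (hα : -1 < α) :
    ∃ E > (0:ℝ), ∃ F : ℝ, 1 ≤ F ∧ ∀ w : ℂ, 0 < w.re → 1 ≤ w.im → ∀ k : ℕ,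
      ‖phikC α k w‖ ≤
        E * F ^ k * w.im ^ ((⌊(α - 1) / 2⌋ + 2).toNat + k) := by
  set a : ℕ := (⌊(α - 1) / 2⌋ + 2).toNat with ha_def
  have hfloor : (-1 : ℤ) ≤ ⌊(α - 1) / 2⌋ := by
    rw [Int.le_floor]; push_cast; linarith
  have haZ : (a : ℤ) = ⌊(α - 1) / 2⌋ + 2 := Int.toNat_of_nonneg (by omega)
  have ha_cast : (a : ℝ) = (⌊(α - 1) / 2⌋ : ℝ) + 2 := by exact_mod_cast haZ
  have ha_half : α / 2 ≤ (a : ℝ) := by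
    have h1 : (α - 1) / 2 - 1 < (⌊(α - 1) / 2⌋ : ℝ) := by
      have := Int.sub_one_lt_floor ((α - 1) / 2)
      linarith
    linarith
  set c : ℝ := min 1 ((α + 1) / 2) with hc_def
  have hc0 : 0 < c := lt_min one_pos (by linarith)
  have hc1 : c ≤ 1 := min_le_left _ _
  have hGa : 0 < Real.Gamma (α + 1) := Real.Gamma_pos_of_pos (by linarith)
  have hGpos : ∀ m : ℕ, 0 < Real.Gamma ((m : ℝ) + α + 1) := by
    intro m
    apply Real.Gamma_pos_of_pos
    have : (0:ℝ) ≤ (m : ℝ) := Nat.cast_nonneg m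
    linarith
  set A : ℝ := (⌈α⌉₊ : ℝ) with hA_def
  have hA0 : (0:ℝ) ≤ A := Nat.cast_nonneg _
  set E : ℝ := (Real.sqrt (Real.Gamma (α + 1)))⁻¹ * 2 ^ (a * a + a + 1) with hE_def
  set t : ℝ := 2 ^ (a + 1) / c with ht_def
  have ht0 : 0 < t := by positivity
  set G : ℝ := Real.sqrt c⁻¹ * (A + 1) with hG_def
  have hsc : 1 ≤ Real.sqrt c⁻¹ := by
    rw [show (1:ℝ) = Real.sqrt 1 by simp]
    apply Real.sqrt_le_sqrt
    rw [le_inv_comm₀ one_pos hc0]; simpa using hc1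
  have hG1 : 1 ≤ G := by
    rw [hG_def]
    calc (1:ℝ) = 1 * 1 := by ring
      _ ≤ Real.sqrt c⁻¹ * (A + 1) := by
          apply mul_le_mul hsc (by linarith) one_pos.le
          linarith
  set F : ℝ := G * (t + 1) with hF_def
  have hE0 : 0 < E := by
    have : 0 < Real.sqrt (Real.Gamma (α + 1)) := Real.sqrt_pos.mpr hGa
    positivity
  refine ⟨E, hE0, F, ?_, ?_⟩
  · calc (1:ℝ) = 1 * 1 := by ring
      _ ≤ G * (t + 1) := mul_le_mul hG1 (by linarith) one_pos.le (by linarith)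
  intro w hre him k
  set r : ℝ := ‖w‖ with hr_def
  set x : ℝ := w.re with hx_def
  set y : ℝ := w.im with hy_def
  have hy1 : 1 ≤ y := him
  have hyr : y ≤ r := le_trans (le_abs_self _) (Complex.abs_im_le_norm w)
  have hr1 : 1 ≤ r := le_trans hy1 hyr
  have hr0 : 0 < r := lt_of_lt_of_le one_pos hr1
  have hrxy : r ≤ x + y := by
    have h := Complex.norm_le_abs_re_add_abs_im w
    rw [abs_of_pos hre, abs_of_pos (lt_of_lt_of_le one_pos hy1)] at h
    exact h
  -- factor bounds
  have hcpow : ‖w ^ ((α : ℂ) / 2)‖ ≤ r ^ (α / 2) := by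
    have h := Complex.norm_cpow_le w ((α : ℂ) / 2)
    have e1 : ((α : ℂ) / 2) = ((α / 2 : ℝ) : ℂ) := by push_cast; ring
    rw [e1] at h
    simpa using h
  have hexp : ‖Complex.exp (-w / 2)‖ = Real.exp (-(x / 2)) := by
    rw [Complex.norm_exp]
    congr 1
    simp [Complex.div_re]
    ring
  -- bound on |hkC|
  have hhk : ‖hkC α k w‖ ≤
      Real.sqrt (Real.Gamma ((k : ℝ) + 1) / Real.Gamma ((k : ℝ) + α + 1)) *
        ∑ j ∈ Finset.range (k + 1),
          Real.Gamma ((k : ℝ) + α + 1) /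
            (Real.Gamma ((j : ℝ) + α + 1) * ((k - j).factorial : ℝ) * (j.factorial : ℝ)) *
            r ^ j := by
    rw [hkC, norm_mul]
    have habs1 : ‖((Real.sqrt (Real.Gamma ((k : ℝ) + 1) / Real.Gamma ((k : ℝ) + α + 1)) : ℝ) : ℂ)‖ =
        Real.sqrt (Real.Gamma ((k : ℝ) + 1) / Real.Gamma ((k : ℝ) + α + 1)) := by
      rw [Complex.norm_real, Real.norm_eq_abs, abs_of_nonneg (Real.sqrt_nonneg _)]
    rw [habs1]
    apply mul_le_mul_of_nonneg_left _ (Real.sqrt_nonneg _)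
    refine le_trans (norm_sum_le _ _) (Finset.sum_le_sum ?_)
    intro j hj
    rw [norm_mul, norm_mul, norm_pow]
    have h1 : ‖(-1 : ℂ)‖ = 1 := by simp
    rw [h1, one_pow, one_mul, norm_pow]
    have hco : (0:ℝ) ≤ Real.Gamma ((k : ℝ) + α + 1) /
        (Real.Gamma ((j : ℝ) + α + 1) * ((k - j).factorial : ℝ) * (j.factorial : ℝ)) := by
      apply div_nonneg (hGpos k).le
      have := hGpos j
      positivity
    rw [Complex.norm_real, Real.norm_eq_abs, abs_of_nonneg hco]
  -- per-j bound
  have hperj : ∀ j ∈ Finset.range (k + 1),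
      Real.sqrt (Real.Gamma ((k : ℝ) + 1) / Real.Gamma ((k : ℝ) + α + 1)) *
        (Real.Gamma ((k : ℝ) + α + 1) /
          (Real.Gamma ((j : ℝ) + α + 1) * ((k - j).factorial : ℝ) * (j.factorial : ℝ)) *
          r ^ j) * (r ^ (α / 2) * Real.exp (-(x / 2)))
      ≤ E * G ^ k * (t ^ j * 1 ^ (k - j) * (k.choose j : ℝ)) * y ^ (a + k) := by
    intro j hj
    have hjk : j ≤ k := Nat.lt_succ_iff.mp (Finset.mem_range.mp hj)
    -- (i) r-power bound
    have hi : r ^ (α / 2) * Real.exp (-(x / 2)) * r ^ j ≤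
        2 ^ (a + j + 1) * ((a + j).factorial : ℝ) * y ^ (a + j) := by
      have e1 : r ^ (α / 2) * r ^ j = r ^ (α / 2 + j) := by
        rw [← Real.rpow_natCast r j, ← Real.rpow_add hr0]
      have e2 : r ^ (α / 2 + j) ≤ r ^ ((a + j : ℕ) : ℝ) := by
        apply Real.rpow_le_rpow_of_exponent_le hr1
        push_cast
        linarith
      have e3 : r ^ ((a + j : ℕ) : ℝ) = r ^ (a + j) := Real.rpow_natCast r (a + j)
      have e4 : r ^ (a + j) ≤ (x + y) ^ (a + j) :=
        pow_le_pow_left₀ hr0.le hrxy _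
      calc r ^ (α / 2) * Real.exp (-(x / 2)) * r ^ j
          = (r ^ (α / 2) * r ^ j) * Real.exp (-(x / 2)) := by ring
        _ ≤ (x + y) ^ (a + j) * Real.exp (-(x / 2)) := by
            apply mul_le_mul_of_nonneg_right _ (Real.exp_nonneg _)
            rw [e1]
            exact le_trans e2 (by rw [e3]; exact e4)
        _ ≤ 2 ^ (a + j + 1) * ((a + j).factorial : ℝ) * y ^ (a + j) :=
            aux_addpow_exp x y hre.le hy1 (a + j)
    -- (ii) sqrt factor bound
    have hii : Real.sqrt (Real.Gamma ((k : ℝ) + 1) / Real.Gamma ((k : ℝ) + α + 1)) ≤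
        (Real.sqrt (Real.Gamma (α + 1)))⁻¹ * (Real.sqrt c⁻¹) ^ k := by
      have hf : Real.Gamma ((k : ℝ) + 1) = (k.factorial : ℝ) := Real.Gamma_nat_eq_factorial k
      have hlow := gamma_lower α hα k
      have hden : 0 < Real.Gamma (α + 1) * c ^ k * (k.factorial : ℝ) := by positivity
      have h1 : Real.Gamma ((k : ℝ) + 1) / Real.Gamma ((k : ℝ) + α + 1) ≤
          (Real.Gamma (α + 1))⁻¹ * (c⁻¹) ^ k := by
        rw [hf, div_le_iff₀ (hGpos k)]
        calc (k.factorial : ℝ)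
            = (Real.Gamma (α + 1))⁻¹ * (c⁻¹) ^ k *
                (Real.Gamma (α + 1) * c ^ k * (k.factorial : ℝ)) := by
              have hkf : (0:ℝ) < (k.factorial : ℝ) := by positivity
              field_simp
              rw [← mul_pow, one_div_mul_cancel hc0.ne', one_pow]
          _ ≤ (Real.Gamma (α + 1))⁻¹ * (c⁻¹) ^ k * Real.Gamma ((k : ℝ) + α + 1) := by
              exact mul_le_mul_of_nonneg_left hlow (by positivity)
      calc Real.sqrt (Real.Gamma ((k : ℝ) + 1) / Real.Gamma ((k : ℝ) + α + 1))
          ≤ Real.sqrt ((Real.Gamma (α + 1))⁻¹ * (c⁻¹) ^ k) := Real.sqrt_le_sqrt h1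
        _ = (Real.sqrt (Real.Gamma (α + 1)))⁻¹ * (Real.sqrt c⁻¹) ^ k := by
            rw [Real.sqrt_mul (by positivity), Real.sqrt_inv,
              sqrt_pow_eq c⁻¹ (by positivity)]
    -- (iii) coefficient bound
    have hiii : Real.Gamma ((k : ℝ) + α + 1) /
        (Real.Gamma ((j : ℝ) + α + 1) * ((k - j).factorial : ℝ) * (j.factorial : ℝ)) ≤
        (A + 1) ^ k * (c⁻¹) ^ j * (k.choose j : ℝ) / (j.factorial : ℝ) := by
      have hup := gamma_upper α hα k
      have hlow := gamma_lower α hα j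
      have hd0 : 0 < Real.Gamma (α + 1) * c ^ j * (j.factorial : ℝ) *
          ((k - j).factorial : ℝ) * (j.factorial : ℝ) := by positivity
      calc Real.Gamma ((k : ℝ) + α + 1) /
            (Real.Gamma ((j : ℝ) + α + 1) * ((k - j).factorial : ℝ) * (j.factorial : ℝ))
          ≤ (Real.Gamma (α + 1) * (A + 1) ^ k * (k.factorial : ℝ)) /
            (Real.Gamma (α + 1) * c ^ j * (j.factorial : ℝ) *
              ((k - j).factorial : ℝ) * (j.factorial : ℝ)) := by
            apply div_le_div₀ (by positivity) hup hd0
            apply mul_le_mul_of_nonneg_right _ (by positivity)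
            exact mul_le_mul_of_nonneg_right hlow (by positivity)
        _ = (A + 1) ^ k * (c⁻¹) ^ j * (k.choose j : ℝ) / (j.factorial : ℝ) := by
            rw [Nat.cast_choose ℝ hjk, inv_pow]
            have h1 : (j.factorial : ℝ) ≠ 0 := by positivity
            have h2 : ((k - j).factorial : ℝ) ≠ 0 := by positivity
            field_simp
    -- (iv) factorial bound
    have hiv : ((a + j).factorial : ℝ) ≤ (j.factorial : ℝ) * 2 ^ (a * a) * 2 ^ (a * j) := by
      have h1 : (j + a).factorial ≤ j.factorial * (j + a) ^ a := fact_add_le j a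
      have h2 : (j + a) ^ a ≤ (2 ^ (j + a)) ^ a :=
        Nat.pow_le_pow_left (Nat.lt_two_pow_self (n := j + a)).le a
      have h3 : (2 ^ (j + a)) ^ a = 2 ^ (a * a) * 2 ^ (a * j) := by
        rw [← pow_mul, ← pow_add]
        congr 1
        ring
      have : (a + j).factorial ≤ j.factorial * (2 ^ (a * a) * 2 ^ (a * j)) := by
        rw [Nat.add_comm a j]
        calc (j + a).factorial ≤ j.factorial * (j + a) ^ a := h1
          _ ≤ j.factorial * (2 ^ (j + a)) ^ a := Nat.mul_le_mul_left _ h2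
          _ = j.factorial * (2 ^ (a * a) * 2 ^ (a * j)) := by rw [h3]
      calc ((a + j).factorial : ℝ) ≤ (j.factorial : ℝ) * (2 ^ (a * a) * 2 ^ (a * j)) := by
            exact_mod_cast this
        _ = (j.factorial : ℝ) * 2 ^ (a * a) * 2 ^ (a * j) := by ring
    -- combine
    have hs0 : 0 ≤ Real.sqrt (Real.Gamma ((k : ℝ) + 1) / Real.Gamma ((k : ℝ) + α + 1)) :=
      Real.sqrt_nonneg _
    have hco0 : (0:ℝ) ≤ Real.Gamma ((k : ℝ) + α + 1) /
        (Real.Gamma ((j : ℝ) + α + 1) * ((k - j).factorial : ℝ) * (j.factorial : ℝ)) := by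
      apply div_nonneg (hGpos k).le
      have := hGpos j
      positivity
    calc Real.sqrt (Real.Gamma ((k : ℝ) + 1) / Real.Gamma ((k : ℝ) + α + 1)) *
          (Real.Gamma ((k : ℝ) + α + 1) /
            (Real.Gamma ((j : ℝ) + α + 1) * ((k - j).factorial : ℝ) * (j.factorial : ℝ)) *
            r ^ j) * (r ^ (α / 2) * Real.exp (-(x / 2)))
        = Real.sqrt (Real.Gamma ((k : ℝ) + 1) / Real.Gamma ((k : ℝ) + α + 1)) *
          (Real.Gamma ((k : ℝ) + α + 1) /
            (Real.Gamma ((j : ℝ) + α + 1) * ((k - j).factorial : ℝ) * (j.factorial : ℝ))) *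
          (r ^ (α / 2) * Real.exp (-(x / 2)) * r ^ j) := by ring
      _ ≤ ((Real.sqrt (Real.Gamma (α + 1)))⁻¹ * (Real.sqrt c⁻¹) ^ k) *
          ((A + 1) ^ k * (c⁻¹) ^ j * (k.choose j : ℝ) / (j.factorial : ℝ)) *
          (2 ^ (a + j + 1) * ((a + j).factorial : ℝ) * y ^ (a + j)) := by
          apply mul_le_mul _ hi (by positivity) (by positivity)
          exact mul_le_mul hii hiii hco0 (by positivity)
      _ ≤ ((Real.sqrt (Real.Gamma (α + 1)))⁻¹ * (Real.sqrt c⁻¹) ^ k) *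
          ((A + 1) ^ k * (c⁻¹) ^ j * (k.choose j : ℝ) / (j.factorial : ℝ)) *
          (2 ^ (a + j + 1) * ((j.factorial : ℝ) * 2 ^ (a * a) * 2 ^ (a * j)) * y ^ (a + k)) := by
          have hyak : y ^ (a + j) ≤ y ^ (a + k) :=
            pow_le_pow_right₀ hy1 (by omega)
          gcongr <;> first | exact hiv | exact hyak | positivity
      _ = E * G ^ k * (t ^ j * 1 ^ (k - j) * (k.choose j : ℝ)) * y ^ (a + k) := by
          rw [hE_def, hG_def, ht_def]
          have h1 : (j.factorial : ℝ) ≠ 0 := by positivity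
          have h2 : c ≠ 0 := ne_of_gt hc0
          field_simp
          simp only [mul_pow, div_pow, one_pow, ← pow_mul]
          ring
  -- sum up
  have hsum : ∑ j ∈ Finset.range (k + 1),
      (E * G ^ k * (t ^ j * 1 ^ (k - j) * (k.choose j : ℝ)) * y ^ (a + k)) =
      E * F ^ k * y ^ (a + k) := by
    have h1 : ∑ j ∈ Finset.range (k + 1), t ^ j * 1 ^ (k - j) * (k.choose j : ℝ) =
        (t + 1) ^ k := (add_pow t 1 k).symm
    calc ∑ j ∈ Finset.range (k + 1),
          E * G ^ k * (t ^ j * 1 ^ (k - j) * (k.choose j : ℝ)) * y ^ (a + k)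
        = (E * G ^ k * y ^ (a + k)) *
            ∑ j ∈ Finset.range (k + 1), t ^ j * 1 ^ (k - j) * (k.choose j : ℝ) := by
          rw [Finset.mul_sum]
          exact Finset.sum_congr rfl fun j hj => by ring
      _ = (E * G ^ k * y ^ (a + k)) * (t + 1) ^ k := by rw [h1]
      _ = E * F ^ k * y ^ (a + k) := by rw [hF_def, mul_pow G (t + 1) k]; ring
  calc ‖phikC α k w‖
      = ‖w ^ ((α : ℂ) / 2)‖ * ‖Complex.exp (-w / 2)‖ *
          ‖hkC α k w‖ := by rw [phikC, norm_mul, norm_mul]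
    _ ≤ r ^ (α / 2) * Real.exp (-(x / 2)) *
          (Real.sqrt (Real.Gamma ((k : ℝ) + 1) / Real.Gamma ((k : ℝ) + α + 1)) *
            ∑ j ∈ Finset.range (k + 1),
              Real.Gamma ((k : ℝ) + α + 1) /
                (Real.Gamma ((j : ℝ) + α + 1) * ((k - j).factorial : ℝ) *
                  (j.factorial : ℝ)) * r ^ j) := by
        rw [hexp]
        apply mul_le_mul _ hhk (norm_nonneg _) (by positivity)
        exact mul_le_mul_of_nonneg_right hcpow (Real.exp_nonneg _)
    _ = ∑ j ∈ Finset.range (k + 1),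
          Real.sqrt (Real.Gamma ((k : ℝ) + 1) / Real.Gamma ((k : ℝ) + α + 1)) *
            (Real.Gamma ((k : ℝ) + α + 1) /
              (Real.Gamma ((j : ℝ) + α + 1) * ((k - j).factorial : ℝ) *
                (j.factorial : ℝ)) * r ^ j) * (r ^ (α / 2) * Real.exp (-(x / 2))) := by
        rw [Finset.mul_sum, Finset.mul_sum]
        exact Finset.sum_congr rfl fun j hj => by ring
    _ ≤ ∑ j ∈ Finset.range (k + 1),
          (E * G ^ k * (t ^ j * 1 ^ (k - j) * (k.choose j : ℝ)) * y ^ (a + k)) :=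
        Finset.sum_le_sum hperj
    _ = E * F ^ k * y ^ (a + k) := hsum


private lemma pow_self_le_exp (q : ℕ) : ((q : ℝ)) ^ q ≤ (q.factorial : ℝ) * Real.exp q := by
  have h1 : ((q : ℝ)) ^ q / (q.factorial : ℝ) ≤ Real.exp q := by
    calc ((q : ℝ)) ^ q / (q.factorial : ℝ)
        ≤ ∑ n ∈ Finset.range (q + 1), (q : ℝ) ^ n / n.factorial :=
          Finset.single_le_sum (f := fun n => (q : ℝ) ^ n / n.factorial)
            (fun n _ => by positivity) (Finset.self_mem_range_succ q)
      _ ≤ Real.exp q := Real.sum_le_exp_of_nonneg (by positivity) _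
  have hq : (0:ℝ) < (q.factorial : ℝ) := by positivity
  rw [div_le_iff₀ hq] at h1
  linarith

private lemma rpow_gap_bound (μ T : ℝ) (hμ : 0 < μ) (hT : μ ≤ T) (p n : ℕ) (q : ℝ)
    (hpq : (p : ℝ) ≤ q) (hqn : q - p ≤ n) :
    T ^ p ≤ T ^ q * (max 1 μ⁻¹) ^ n := by
  have hT0 : 0 < T := lt_of_lt_of_le hμ hT
  have hM1 : (1:ℝ) ≤ max 1 μ⁻¹ := le_max_left _ _
  have h2 : T ^ ((p : ℝ) - q) ≤ μ ^ ((p : ℝ) - q) :=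
    Real.rpow_le_rpow_of_nonpos hμ hT (by linarith)
  have h3 : μ ^ ((p : ℝ) - q) ≤ (max 1 μ⁻¹) ^ n := by
    have e1 : μ ^ ((p : ℝ) - q) = μ⁻¹ ^ (q - (p : ℝ)) := by
      rw [Real.inv_rpow hμ.le, ← Real.rpow_neg hμ.le]
      congr 1
      ring
    rw [e1]
    calc μ⁻¹ ^ (q - (p : ℝ)) ≤ (max 1 μ⁻¹) ^ (q - (p : ℝ)) :=
          Real.rpow_le_rpow (inv_nonneg.mpr hμ.le) (le_max_right _ _) (by linarith)
      _ ≤ (max 1 μ⁻¹) ^ ((n : ℕ) : ℝ) :=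
          Real.rpow_le_rpow_of_exponent_le hM1 (by push_cast; linarith)
      _ = (max 1 μ⁻¹) ^ n := Real.rpow_natCast _ n
  calc T ^ p = T ^ ((p : ℕ) : ℝ) := (Real.rpow_natCast T p).symm
    _ = T ^ q * T ^ ((p : ℝ) - q) := by rw [← Real.rpow_add hT0]; congr 1; ring
    _ ≤ T ^ q * (max 1 μ⁻¹) ^ n :=
        mul_le_mul_of_nonneg_left (le_trans h2 h3) (Real.rpow_nonneg hT0.le q)

private lemma count_bound (N Pn : ℕ) (hN : 1 ≤ N) (hNP : N ≤ Pn) :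
    4 * (N : ℝ) * (4 * (N : ℝ)) ^ (2 * Pn) ≤
      (4 * Real.exp 1) ^ (2 * Pn + 1) * ((2 * Pn).factorial : ℝ) := by
  set q : ℕ := 2 * Pn + 1 with hq_def
  have hβ2q : 4 * (N : ℝ) ≤ 2 * (q : ℝ) := by
    have h1 : (N : ℝ) ≤ (Pn : ℝ) := by exact_mod_cast hNP
    rw [hq_def]
    push_cast
    linarith
  have h1 : 4 * (N : ℝ) * (4 * (N : ℝ)) ^ (2 * Pn) = (4 * (N : ℝ)) ^ q := by
    rw [hq_def, pow_succ]
    ring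
  have h2 : (4 * (N : ℝ)) ^ q ≤ (2 * (q : ℝ)) ^ q :=
    pow_le_pow_left₀ (by positivity) hβ2q q
  have h4 : (q.factorial : ℝ) ≤ 2 ^ q * ((2 * Pn).factorial : ℝ) := by
    have e1 : q.factorial = q * (2 * Pn).factorial := by
      rw [hq_def, Nat.factorial_succ]
    have h5 : (q : ℝ) ≤ 2 ^ q := by
      exact_mod_cast (Nat.lt_two_pow_self (n := q)).le
    calc (q.factorial : ℝ) = (q : ℝ) * ((2 * Pn).factorial : ℝ) := by
          rw [e1]; push_cast; ring
      _ ≤ 2 ^ q * ((2 * Pn).factorial : ℝ) :=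
          mul_le_mul_of_nonneg_right h5 (by positivity)
  have h5 : Real.exp ((q : ℕ) : ℝ) = (Real.exp 1) ^ q := by
    rw [← Real.exp_nat_mul]
    norm_num
  calc 4 * (N : ℝ) * (4 * (N : ℝ)) ^ (2 * Pn) = (4 * (N : ℝ)) ^ q := h1
    _ ≤ (2 * (q : ℝ)) ^ q := h2
    _ = 2 ^ q * ((q : ℝ)) ^ q := by rw [mul_pow]
    _ ≤ 2 ^ q * ((q.factorial : ℝ) * Real.exp q) :=
        mul_le_mul_of_nonneg_left (pow_self_le_exp q) (by positivity)
    _ ≤ 2 ^ q * ((2 ^ q * ((2 * Pn).factorial : ℝ)) * (Real.exp 1) ^ q) := by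
        rw [← h5]
        exact mul_le_mul_of_nonneg_left
          (mul_le_mul_of_nonneg_right h4 (Real.exp_nonneg _)) (by positivity)
    _ = (4 * Real.exp 1) ^ q * ((2 * Pn).factorial : ℝ) := by
        rw [show (4 : ℝ) * Real.exp 1 = 2 * 2 * Real.exp 1 by norm_num,
          mul_pow, mul_pow]
        ring


/-- uniform upper bound for the rescaled LUE correlation kernel in the upper
half plane, with `P = N + ⌊(α−1)/2⌋ + 1`. -/
theorem kernel_upper_bound (α : ℝ) (hα : -1 < α) (μ : ℝ) (hμ : 0 < μ) :
    ∃ C > (0 : ℝ), ∃ Ω > (0 : ℝ), ∀ N : ℕ, 1 / (4 * μ) ≤ (N : ℝ) →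
      ∀ z₁ z₂ : ℂ, 0 < z₁.re → 0 < z₂.re → μ ≤ z₁.im → μ ≤ z₂.im →
        (N : ℝ)⁻¹ * ‖KNS α N z₁ z₂ (((4 * (N : ℝ) : ℝ) : ℂ))⁻¹‖ ≤
          C * Ω ^ (2 * N - 2) *
            Real.Gamma (2 * (((N : ℤ) + ⌊(α - 1) / 2⌋ + 1 : ℤ) : ℝ) + 1) *
            z₁.im ^ ((((N : ℤ) + ⌊(α - 1) / 2⌋ + 1 : ℤ) : ℝ) + 1 / 2) *
            z₂.im ^ ((((N : ℤ) + ⌊(α - 1) / 2⌋ + 1 : ℤ) : ℝ) + 1 / 2) := by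
  obtain ⟨E, hE0, F, hF1, hphi⟩ := phik_bound α hα
  set a : ℕ := (⌊(α - 1) / 2⌋ + 2).toNat with ha_def
  have hfloor : (-1 : ℤ) ≤ ⌊(α - 1) / 2⌋ := by
    rw [Int.le_floor]; push_cast; linarith
  have haZ : (a : ℤ) = ⌊(α - 1) / 2⌋ + 2 := Int.toNat_of_nonneg (by omega)
  have ha1 : 1 ≤ a := by omega
  set M : ℝ := max 1 μ⁻¹ with hM_def
  have hM1 : (1:ℝ) ≤ M := le_max_left _ _
  have hM0 : (0:ℝ) < M := lt_of_lt_of_le one_pos hM1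
  have hF0 : (0:ℝ) < F := lt_of_lt_of_le one_pos hF1
  have hexp1 : (1:ℝ) ≤ Real.exp 1 := by
    have := Real.add_one_le_exp (1:ℝ); linarith
  refine ⟨E ^ 2 * (F * M) ^ 2 * (4 * Real.exp 1) ^ (2 * a + 1), by positivity,
    (4 * Real.exp 1) * (F * M), by positivity, ?_⟩
  intro N hN z₁ z₂ hre1 hre2 him1 him2
  have hμN : (0:ℝ) < (N : ℝ) := lt_of_lt_of_le (by positivity) hN
  have hN1 : 1 ≤ N := Nat.cast_pos.mp hμN
  have hNr : (1:ℝ) ≤ (N : ℝ) := by exact_mod_cast hN1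
  have h4Nμ : 1 ≤ 4 * (N : ℝ) * μ := by
    rw [div_le_iff₀ (by positivity)] at hN
    nlinarith
  set β : ℝ := 4 * (N : ℝ) with hβ_def
  have hβ0 : (0:ℝ) < β := by positivity
  have hβ1 : (1:ℝ) ≤ β := by rw [hβ_def]; linarith
  set Pn : ℕ := a + (N - 1) with hPn_def
  have hNP : N ≤ Pn := by omega
  have hPn_cast : ((N : ℤ) + ⌊(α - 1) / 2⌋ + 1) = (Pn : ℤ) := by
    generalize hL : ⌊(α - 1) / 2⌋ = L at haZ ⊢
    omega
  have hP_cast_real : (((N : ℤ) + ⌊(α - 1) / 2⌋ + 1 : ℤ) : ℝ) = (Pn : ℝ) := by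
    rw [hPn_cast]; norm_num
  have hPn_real : (Pn : ℝ) = (a : ℝ) + (N : ℝ) - 1 := by
    rw [hPn_def]
    push_cast [Nat.cast_sub hN1]
    ring
  have hz10 : (0:ℝ) < z₁.im := lt_of_lt_of_le hμ him1
  have hz20 : (0:ℝ) < z₂.im := lt_of_lt_of_le hμ him2
  have hT1 : (0:ℝ) ≤ z₁.im ^ ((Pn : ℝ) + 1 / 2) := Real.rpow_nonneg hz10.le _
  have hT2 : (0:ℝ) ≤ z₂.im ^ ((Pn : ℝ) + 1 / 2) := Real.rpow_nonneg hz20.le _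
  -- rewrite the Gamma factor
  have hGam : Real.Gamma (2 * ((Pn : ℝ)) + 1) = ((2 * Pn).factorial : ℝ) := by
    rw [show 2 * (Pn : ℝ) + 1 = ((2 * Pn : ℕ) : ℝ) + 1 by push_cast; ring]
    exact Real.Gamma_nat_eq_factorial (2 * Pn)
  rw [hP_cast_real, hGam]
  -- unfold KNS
  rw [KNS, inv_inv, div_inv_eq_mul, div_inv_eq_mul, norm_mul, Complex.norm_real, Real.norm_eq_abs,
    abs_of_pos hβ0]
  -- per-side bound
  have him_w : ∀ z : ℂ, μ ≤ z.im → 1 ≤ (z * ((β : ℝ) : ℂ)).im := by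
    intro z hz
    have h : (z * ((β : ℝ) : ℂ)).im = z.im * β := by simp [Complex.mul_im]
    rw [h, hβ_def]
    nlinarith
  have hre_w : ∀ z : ℂ, 0 < z.re → 0 < (z * ((β : ℝ) : ℂ)).re := by
    intro z hz
    have h : (z * ((β : ℝ) : ℂ)).re = z.re * β := by simp [Complex.mul_re]
    rw [h]
    exact mul_pos hz hβ0
  have hside : ∀ z : ℂ, 0 < z.re → μ ≤ z.im → ∀ k, k < N →
      ‖phikC α k (z * ((β : ℝ) : ℂ))‖ ≤
        E * F ^ N * M ^ N * β ^ Pn * z.im ^ ((Pn : ℝ) + 1 / 2) := by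
    intro z hz himz k hkN
    have h0 := hphi (z * ((β : ℝ) : ℂ)) (hre_w z hz) (him_w z himz) k
    have himβ : (z * ((β : ℝ) : ℂ)).im = z.im * β := by simp [Complex.mul_im]
    rw [himβ] at h0
    have hz0 : (0:ℝ) < z.im := lt_of_lt_of_le hμ himz
    have h2 : β ^ (a + k) ≤ β ^ Pn := pow_le_pow_right₀ hβ1 (by omega)
    have h3 : z.im ^ (a + k) ≤ z.im ^ ((Pn : ℝ) + 1 / 2) * M ^ N := by
      apply rpow_gap_bound μ z.im hμ himz (a + k) N ((Pn : ℝ) + 1 / 2)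
      · have hak : (a + k : ℕ) ≤ Pn := by omega
        have : ((a + k : ℕ) : ℝ) ≤ (Pn : ℝ) := by exact_mod_cast hak
        push_cast at this ⊢
        linarith
      · rw [hPn_real]
        push_cast
        have hkN' : (0:ℝ) ≤ (k : ℝ) := by positivity
        linarith
    calc ‖phikC α k (z * ((β : ℝ) : ℂ))‖
        ≤ E * F ^ k * (z.im * β) ^ (a + k) := h0
      _ = E * F ^ k * (z.im ^ (a + k) * β ^ (a + k)) := by rw [mul_pow]
      _ ≤ E * F ^ N * ((z.im ^ ((Pn : ℝ) + 1 / 2) * M ^ N) * β ^ Pn) := by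
          have hFk : F ^ k ≤ F ^ N := pow_le_pow_right₀ hF1 hkN.le
          apply mul_le_mul
          · exact mul_le_mul_of_nonneg_left hFk hE0.le
          · exact mul_le_mul h3 h2 (by positivity) (by positivity)
          · positivity
          · positivity
      _ = E * F ^ N * M ^ N * β ^ Pn * z.im ^ ((Pn : ℝ) + 1 / 2) := by ring
  -- kernel bound
  have hKb : ‖KNC α N (z₁ * ((β : ℝ) : ℂ)) (z₂ * ((β : ℝ) : ℂ))‖ ≤
      (N : ℝ) * ((E * F ^ N * M ^ N * β ^ Pn) ^ 2 *
        (z₁.im ^ ((Pn : ℝ) + 1 / 2) * z₂.im ^ ((Pn : ℝ) + 1 / 2))) := by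
    rw [KNC]
    calc ‖∑ k ∈ Finset.range N,
          phikC α k (z₁ * ((β : ℝ) : ℂ)) * phikC α k (z₂ * ((β : ℝ) : ℂ))‖
        ≤ ∑ k ∈ Finset.range N, ‖phikC α k (z₁ * ((β : ℝ) : ℂ)) * phikC α k (z₂ * ((β : ℝ) : ℂ))‖ :=
          norm_sum_le _ _
      _ ≤ ∑ _k ∈ Finset.range N, (E * F ^ N * M ^ N * β ^ Pn) ^ 2 *
            (z₁.im ^ ((Pn : ℝ) + 1 / 2) * z₂.im ^ ((Pn : ℝ) + 1 / 2)) := by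
          apply Finset.sum_le_sum
          intro k hk
          rw [norm_mul]
          have b1 := hside z₁ hre1 him1 k (Finset.mem_range.mp hk)
          have b2 := hside z₂ hre2 him2 k (Finset.mem_range.mp hk)
          have hD0 : (0:ℝ) ≤ E * F ^ N * M ^ N * β ^ Pn := by positivity
          calc ‖phikC α k (z₁ * ((β : ℝ) : ℂ))‖ *
                ‖phikC α k (z₂ * ((β : ℝ) : ℂ))‖
              ≤ (E * F ^ N * M ^ N * β ^ Pn * z₁.im ^ ((Pn : ℝ) + 1 / 2)) *
                (E * F ^ N * M ^ N * β ^ Pn * z₂.im ^ ((Pn : ℝ) + 1 / 2)) := by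
                apply mul_le_mul b1 b2 (norm_nonneg _)
                exact mul_nonneg hD0 hT1
            _ = (E * F ^ N * M ^ N * β ^ Pn) ^ 2 *
                (z₁.im ^ ((Pn : ℝ) + 1 / 2) * z₂.im ^ ((Pn : ℝ) + 1 / 2)) := by ring
      _ = (N : ℝ) * ((E * F ^ N * M ^ N * β ^ Pn) ^ 2 *
            (z₁.im ^ ((Pn : ℝ) + 1 / 2) * z₂.im ^ ((Pn : ℝ) + 1 / 2))) := by
          rw [Finset.sum_const, Finset.card_range, nsmul_eq_mul]
  -- the scalar comparison
  have key : 4 * (N : ℝ) * (E * F ^ N * M ^ N * β ^ Pn) ^ 2 ≤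
      (E ^ 2 * (F * M) ^ 2 * (4 * Real.exp 1) ^ (2 * a + 1)) *
        ((4 * Real.exp 1) * (F * M)) ^ (2 * N - 2) * ((2 * Pn).factorial : ℝ) := by
    have count := count_bound N Pn hN1 hNP
    obtain ⟨m, hm⟩ : ∃ m, 2 * N - 2 = m := ⟨2 * N - 2, rfl⟩
    have hm2 : 2 * N = m + 2 := by omega
    have hmq : 2 * Pn + 1 = m + (2 * a + 1) := by omega
    calc 4 * (N : ℝ) * (E * F ^ N * M ^ N * β ^ Pn) ^ 2
        = E ^ 2 * (F * M) ^ (2 * N) * (4 * (N : ℝ) * β ^ (2 * Pn)) := by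
          rw [hβ_def]; ring
      _ ≤ E ^ 2 * (F * M) ^ (2 * N) *
            ((4 * Real.exp 1) ^ (2 * Pn + 1) * ((2 * Pn).factorial : ℝ)) := by
          apply mul_le_mul_of_nonneg_left _ (by positivity)
          rw [hβ_def]
          exact count
      _ = (E ^ 2 * (F * M) ^ 2 * (4 * Real.exp 1) ^ (2 * a + 1)) *
            ((4 * Real.exp 1) * (F * M)) ^ (2 * N - 2) * ((2 * Pn).factorial : ℝ) := by
          rw [hm, hm2, hmq, pow_add, pow_add, mul_pow]
          ring
  -- finish
  have hfin : (N : ℝ)⁻¹ * (β * ‖KNC α N (z₁ * ((β : ℝ) : ℂ)) (z₂ * ((β : ℝ) : ℂ))‖) ≤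
      (4 * (N : ℝ) * (E * F ^ N * M ^ N * β ^ Pn) ^ 2) *
        (z₁.im ^ ((Pn : ℝ) + 1 / 2) * z₂.im ^ ((Pn : ℝ) + 1 / 2)) := by
    have h1 : (N : ℝ)⁻¹ * (β * ‖KNC α N (z₁ * ((β : ℝ) : ℂ)) (z₂ * ((β : ℝ) : ℂ))‖) ≤
        (N : ℝ)⁻¹ * (β * ((N : ℝ) * ((E * F ^ N * M ^ N * β ^ Pn) ^ 2 *
          (z₁.im ^ ((Pn : ℝ) + 1 / 2) * z₂.im ^ ((Pn : ℝ) + 1 / 2))))) := by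
      apply mul_le_mul_of_nonneg_left _ (by positivity)
      exact mul_le_mul_of_nonneg_left hKb hβ0.le
    have h2 : (N : ℝ)⁻¹ * (β * ((N : ℝ) * ((E * F ^ N * M ^ N * β ^ Pn) ^ 2 *
        (z₁.im ^ ((Pn : ℝ) + 1 / 2) * z₂.im ^ ((Pn : ℝ) + 1 / 2))))) =
        (4 * (N : ℝ) * (E * F ^ N * M ^ N * β ^ Pn) ^ 2) *
          (z₁.im ^ ((Pn : ℝ) + 1 / 2) * z₂.im ^ ((Pn : ℝ) + 1 / 2)) := by
      rw [hβ_def]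
      field_simp
    rw [h2] at h1
    exact h1
  refine le_trans hfin ?_
  calc (4 * (N : ℝ) * (E * F ^ N * M ^ N * β ^ Pn) ^ 2) *
        (z₁.im ^ ((Pn : ℝ) + 1 / 2) * z₂.im ^ ((Pn : ℝ) + 1 / 2))
      ≤ ((E ^ 2 * (F * M) ^ 2 * (4 * Real.exp 1) ^ (2 * a + 1)) *
          ((4 * Real.exp 1) * (F * M)) ^ (2 * N - 2) * ((2 * Pn).factorial : ℝ)) *
        (z₁.im ^ ((Pn : ℝ) + 1 / 2) * z₂.im ^ ((Pn : ℝ) + 1 / 2)) :=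
        mul_le_mul_of_nonneg_right key (mul_nonneg hT1 hT2)
    _ = (E ^ 2 * (F * M) ^ 2 * (4 * Real.exp 1) ^ (2 * a + 1)) *
          ((4 * Real.exp 1) * (F * M)) ^ (2 * N - 2) * ((2 * Pn).factorial : ℝ) *
          z₁.im ^ ((Pn : ℝ) + 1 / 2) * z₂.im ^ ((Pn : ℝ) + 1 / 2) := by ring

end RMT
end
end

section
/- Fix a real α > −1, and let (b_N)_{N≥1} be a sequence of reals with 0 < b_N < 1 for all N, b_N → 0, and N·b_N/√(ln N) → ∞ as N → ∞. For each N set N_α = N(N+α) and E_N = ∫₀^{1−b_N} N_α·γ(N_α u) du + ∫_{1+b_N}^{∞} N_α·γ(N_α u) du (so that E_N = 1 − ∫_{1−b_N}^{1+b_N} N_α·γ(N_α u) du). Then for every ε ∈ (0,1) there exists N₀ such that E_N ≤ exp( −(1/2)·N²·b_N²·(1−ε) ) for all N ≥ N₀. (Concentration of the Gamma-distributed trace variable in a shrinking window around 1.) -/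
open MeasureTheory Filter Topology Finset
open scoped Real Classical

noncomputable section

namespace RMT


private lemma neg_log_le {x : ℝ} (h0 : 0 ≤ x) (h1 : x < 1) :
    -Real.log (1 - x) ≤ x + x ^ 2 / (2 * (1 - x)) := by
  have habs : |x| < 1 := by rwa [abs_of_nonneg h0]
  have hs := Real.hasSum_pow_div_log_of_abs_lt_one habs
  have hsum := hs.summable
  have h1' : 0 < 1 - x := by linarith
  rw [← hs.tsum_eq, Summable.tsum_eq_zero_add hsum]
  have hgeo : Summable (fun n : ℕ => x ^ (n + 2) / 2) := by
    refine ((summable_geometric_of_lt_one h0 h1).mul_left (x ^ 2 / 2)).congr fun n => ?_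
    ring
  have htail : (∑' n : ℕ, x ^ (n + 1 + 1) / ((↑(n + 1) : ℝ) + 1)) ≤ x ^ 2 / (2 * (1 - x)) := by
    have hle : (∑' n : ℕ, x ^ (n + 1 + 1) / ((↑(n + 1) : ℝ) + 1)) ≤ ∑' n : ℕ, x ^ (n + 2) / 2 := by
      refine Summable.tsum_le_tsum (fun n => ?_) ((summable_nat_add_iff 1).mpr hsum) hgeo
      have h2n : (2 : ℝ) ≤ (↑(n + 1) : ℝ) + 1 := by push_cast; linarith [Nat.cast_nonneg (α := ℝ) n]
      have hxnn : (0:ℝ) ≤ x ^ (n + 1 + 1) := by positivity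
      calc x ^ (n + 1 + 1) / ((↑(n + 1) : ℝ) + 1) ≤ x ^ (n + 1 + 1) / 2 :=
            div_le_div_of_nonneg_left hxnn two_pos h2n
        _ = x ^ (n + 2) / 2 := by norm_num
    have hval : (∑' n : ℕ, x ^ (n + 2) / 2) = x ^ 2 / (2 * (1 - x)) := by
      have : (∑' n : ℕ, x ^ (n + 2) / 2) = ∑' n : ℕ, (x ^ 2 / 2) * x ^ n :=
        tsum_congr fun n => by ring
      rw [this, tsum_mul_left, tsum_geometric_of_lt_one h0 h1]
      field_simp
    linarith
  have h00 : x ^ (0 + 1) / ((0 : ℕ) + 1 : ℝ) = x := by norm_num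
  push_cast at h00 htail ⊢
  linarith [htail, h00.le, h00.ge]

private lemma le_log_one_add {x : ℝ} (h0 : 0 < x) :
    x - x ^ 2 / 2 ≤ Real.log (1 + x) := by
  have hx1 : 0 < 1 + x := by linarith
  set y : ℝ := x / (1 + x) with hy
  have hy0 : 0 < y := div_pos h0 hx1
  have hy1 : y < 1 := by rw [hy, div_lt_one hx1]; linarith
  have key : y + y ^ 2 / 2 ≤ -Real.log (1 - y) := by
    have hs := Real.hasSum_pow_div_log_of_abs_lt_one (by rwa [abs_of_nonneg hy0.le] : |y| < 1)
    have h2 := sum_le_hasSum (Finset.range 2)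
      (fun i _ => by positivity) hs
    have : (∑ i ∈ Finset.range 2, y ^ (i + 1) / ((i : ℝ) + 1)) = y + y ^ 2 / 2 := by
      simp [Finset.sum_range_succ]
      norm_num
    linarith [this ▸ h2]
  have h1y : 1 - y = (1 + x)⁻¹ := by
    rw [hy]; field_simp; ring
  rw [h1y, Real.log_inv] at key
  -- key : y + y ^ 2 / 2 ≤ log (1 + x)
  have hz : y * (1 + x) = x := div_mul_cancel₀ x hx1.ne'
  nlinarith [key, sq_nonneg (y * x), sq_nonneg y, hy0.le, h0.le]


private lemma integrableOn_aux {k c : ℝ} (hk : 0 < k) (hc : 0 < c) :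
    MeasureTheory.IntegrableOn (fun x : ℝ => Real.exp (-(c * x)) * x ^ (k - 1)) (Set.Ioi 0) := by
  have h := Real.GammaIntegral_convergent hk
  have h2 : MeasureTheory.IntegrableOn
      (fun x : ℝ => Real.exp (-(c * x)) * (c * x) ^ (k - 1)) (Set.Ioi 0) := by
    have h3 := integrableOn_Ioi_comp_mul_left_iff
      (fun x : ℝ => Real.exp (-x) * x ^ (k - 1)) 0 hc
    rw [mul_zero] at h3
    exact h3.mpr h
  have hcp : (0 : ℝ) < c ^ (k - 1) := Real.rpow_pos_of_pos hc _
  have h4 : MeasureTheory.IntegrableOn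
      (fun x : ℝ => ((c : ℝ) ^ (k - 1))⁻¹ * (Real.exp (-(c * x)) * (c * x) ^ (k - 1)))
      (Set.Ioi 0) := h2.const_mul _
  refine h4.congr_fun (fun x hx => ?_) measurableSet_Ioi
  have hx0 : (0 : ℝ) < x := hx
  beta_reduce
  rw [Real.mul_rpow hc.le hx0.le]
  field_simp

private lemma integral_aux {k c : ℝ} (hk : 0 < k) (hc : 0 < c) :
    ∫ x in Set.Ioi (0 : ℝ), Real.exp (-(c * x)) * x ^ (k - 1) = (1 / c) ^ k * Real.Gamma k := by
  rw [← Real.integral_rpow_mul_exp_neg_mul_Ioi hk hc]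
  exact setIntegral_congr_fun measurableSet_Ioi (fun x _ => mul_comm _ _)

private lemma tail_bound (α : ℝ) (N : ℕ) {c A : ℝ}
    (hk : 0 < (N : ℝ) * ((N : ℝ) + α)) (hc : 0 < c) (hA : 0 ≤ A)
    {s : Set ℝ} (hs : MeasurableSet s) (hsub : s ⊆ Set.Ioi 0)
    (hbd : ∀ u ∈ s, Real.exp (-((N : ℝ) * ((N : ℝ) + α) * u)) ≤
      A * Real.exp (-(c * ((N : ℝ) * ((N : ℝ) + α) * u)))) :
    (∫ u in s, (N : ℝ) * ((N : ℝ) + α) * gammaDens α N ((N : ℝ) * ((N : ℝ) + α) * u)) ≤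
      A * c ^ (-((N : ℝ) * ((N : ℝ) + α))) := by
  set k := (N : ℝ) * ((N : ℝ) + α) with hkdef
  have hΓ : 0 < Real.Gamma k := Real.Gamma_pos_of_pos hk
  set g : ℝ → ℝ := fun u =>
    (A * k / Real.Gamma k) * (Real.exp (-(c * (k * u))) * (k * u) ^ (k - 1)) with hgdef
  have hint0 : MeasureTheory.IntegrableOn
      (fun u : ℝ => Real.exp (-(c * (k * u))) * (k * u) ^ (k - 1)) (Set.Ioi 0) := by
    have h3 := integrableOn_Ioi_comp_mul_left_iff
      (fun x : ℝ => Real.exp (-(c * x)) * x ^ (k - 1)) 0 hk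
    rw [mul_zero] at h3
    exact h3.mpr (integrableOn_aux hk hc)
  have hgint : MeasureTheory.IntegrableOn g (Set.Ioi 0) := hint0.const_mul _
  have step1 : (∫ u in s, k * gammaDens α N (k * u)) ≤ ∫ u in s, g u := by
    refine MeasureTheory.integral_mono_of_nonneg ?_ (hgint.mono_set hsub) ?_
    · refine (MeasureTheory.ae_restrict_iff' hs).mpr (Filter.Eventually.of_forall fun u hu => ?_)
      have hgd : 0 ≤ gammaDens α N (k * u) := by
        unfold gammaDens
        rw [← hkdef]
        split_ifs with h
        · have : (0:ℝ) ≤ (k*u) ^ (k-1) := Real.rpow_nonneg h _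
          positivity
        · exact le_refl 0
      positivity
    · refine (MeasureTheory.ae_restrict_iff' hs).mpr (Filter.Eventually.of_forall fun u hu => ?_)
      have hu0 : 0 < u := hsub hu
      have hku : (0 : ℝ) ≤ k * u := by positivity
      have hbd' := hbd u hu
      have hfac : (0 : ℝ) ≤ (k * u) ^ (k - 1) / Real.Gamma k * k := by
        have : (0:ℝ) ≤ (k*u) ^ (k-1) := Real.rpow_nonneg hku _
        positivity
      show k * gammaDens α N (k * u) ≤ g u
      simp only [gammaDens, ← hkdef, if_pos hku, hgdef]
      calc k * (Real.exp (-(k * u)) * (k * u) ^ (k - 1) / Real.Gamma k)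
          = Real.exp (-(k * u)) * ((k * u) ^ (k - 1) / Real.Gamma k * k) := by ring
        _ ≤ A * Real.exp (-(c * (k * u))) * ((k * u) ^ (k - 1) / Real.Gamma k * k) :=
            mul_le_mul_of_nonneg_right hbd' hfac
        _ = A * k / Real.Gamma k * (Real.exp (-(c * (k * u))) * (k * u) ^ (k - 1)) := by ring
  have step2 : (∫ u in s, g u) ≤ ∫ u in Set.Ioi 0, g u := by
    refine MeasureTheory.setIntegral_mono_set hgint ?_ (HasSubset.Subset.eventuallyLE hsub)
    refine (MeasureTheory.ae_restrict_iff' measurableSet_Ioi).mpr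
      (Filter.Eventually.of_forall fun u hu => ?_)
    have hu0 : (0:ℝ) < u := hu
    have h1 : (0:ℝ) ≤ (k * u) ^ (k - 1) := Real.rpow_nonneg (by positivity) _
    have h2 : (0:ℝ) ≤ A * k / Real.Gamma k := by positivity
    exact mul_nonneg h2 (mul_nonneg (Real.exp_nonneg _) h1)
  have step3 : (∫ u in Set.Ioi (0:ℝ), g u) = A * c ^ (-k) := by
    have hcomp : (∫ u in Set.Ioi (0 : ℝ), Real.exp (-(c * (k * u))) * (k * u) ^ (k - 1))
        = k⁻¹ • ∫ x in Set.Ioi (k * 0), Real.exp (-(c * x)) * x ^ (k - 1) :=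
      integral_comp_mul_left_Ioi (fun x => Real.exp (-(c * x)) * x ^ (k - 1)) 0 hk
    rw [mul_zero, integral_aux hk hc, smul_eq_mul] at hcomp
    calc (∫ u in Set.Ioi (0:ℝ), g u)
        = (A * k / Real.Gamma k) * ∫ u in Set.Ioi (0:ℝ),
            Real.exp (-(c * (k * u))) * (k * u) ^ (k - 1) := integral_const_mul _ _
      _ = (A * k / Real.Gamma k) * (k⁻¹ * ((1 / c) ^ k * Real.Gamma k)) := by rw [hcomp]
      _ = A * c ^ (-k) := by
          rw [Real.rpow_neg hc.le, one_div, Real.inv_rpow hc.le]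
          have hck : (0:ℝ) < c ^ k := Real.rpow_pos_of_pos hc _
          field_simp
  calc (∫ u in s, k * gammaDens α N (k * u)) ≤ ∫ u in s, g u := step1
    _ ≤ ∫ u in Set.Ioi 0, g u := step2
    _ = A * c ^ (-k) := step3


private lemma rmt_pt1 {k B u : ℝ} (hk : 0 < k) (hb1 : 0 < B) (hu : u ≤ 1 - B) :
    -(k * u) ≤ B * k * (1 - B) + -((1 + B) * (k * u)) := by
  nlinarith [mul_nonneg (mul_nonneg hb1.le hk.le) (sub_nonneg.mpr hu)]

private lemma rmt_pt2 {k B u : ℝ} (hk : 0 < k) (hb1 : 0 < B) (hu : 1 + B ≤ u) :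
    -(k * u) ≤ -(B * k * (1 + B)) + -((1 - B) * (k * u)) := by
  nlinarith [mul_nonneg (mul_nonneg hb1.le hk.le) (by linarith : (0:ℝ) ≤ u - (1 + B))]

private lemma rmt_E1exp {k B : ℝ} (hk : 0 < k) (hb1 : 0 < B) (hb2 : B < 1) :
    B * k * (1 - B) + Real.log (1 + B) * (-k) ≤ k * (B ^ 2 / (2 * (1 - B)) - B ^ 2) := by
  have h1 := mul_le_mul_of_nonneg_left (le_log_one_add hb1) hk.le
  have h2 : B ^ 2 / 2 ≤ B ^ 2 / (2 * (1 - B)) :=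
    div_le_div_of_nonneg_left (sq_nonneg B) (by linarith) (by linarith)
  have h3 := mul_le_mul_of_nonneg_left h2 hk.le
  nlinarith [h1, h3]

private lemma rmt_E2exp {k B : ℝ} (hk : 0 < k) (hb1 : 0 < B) (hb2 : B < 1) :
    -(B * k * (1 + B)) + Real.log (1 - B) * (-k) ≤ k * (B ^ 2 / (2 * (1 - B)) - B ^ 2) := by
  have h1 := mul_le_mul_of_nonneg_left (neg_log_le hb1.le hb2) hk.le
  nlinarith [h1]

private lemma rmt_final_exponent {α ε B Nv : ℝ} (hα : -1 < α) (hε0 : 0 < ε) (hε1 : ε < 1)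
    (hb1 : 0 < B) (hb2 : B < 1) (hN1 : 1 ≤ Nv)
    (hbδ : B < ε / 2 / (1 + ε / 2))
    (hNbB : Real.sqrt (8 * Real.log 2 / ε) ≤ Nv * B)
    (hNα : 8 * |α| / ε + 1 ≤ Nv) :
    Real.log 2 + Nv * (Nv + α) * (B ^ 2 / (2 * (1 - B)) - B ^ 2) ≤
      -(1 / 2) * Nv ^ 2 * B ^ 2 * (1 - ε) := by
  have hNpos : 0 < Nv := by linarith
  have hk : 0 < Nv * (Nv + α) := by nlinarith
  have hBδ : B * (1 + ε / 2) < ε / 2 := (lt_div_iff₀ (by linarith)).mp hbδ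
  have hB1 : (1 : ℝ) ≤ (1 + ε / 2) * (1 - B) := by nlinarith [hBδ]
  have hD : B ^ 2 / (2 * (1 - B)) ≤ B ^ 2 * (1 + ε / 2) / 2 := by
    rw [div_le_iff₀ (by linarith : (0:ℝ) < 2 * (1 - B))]
    nlinarith [mul_le_mul_of_nonneg_left hB1 (sq_nonneg B)]
  have hq : Nv * (Nv + α) * (B ^ 2 / (2 * (1 - B)) - B ^ 2) ≤
      Nv * (Nv + α) * (-(B ^ 2) * (1 - ε / 2) / 2) :=
    mul_le_mul_of_nonneg_left (by nlinarith [hD]) hk.le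
  have hlog2 : 0 < Real.log 2 := Real.log_pos one_lt_two
  have hs8 : (0 : ℝ) ≤ 8 * Real.log 2 / ε := by positivity
  have hNB2 : 8 * Real.log 2 ≤ ε * (Nv ^ 2 * B ^ 2) := by
    have hsq := Real.sq_sqrt hs8
    have h2 : 8 * Real.log 2 / ε ≤ (Nv * B) ^ 2 := by
      nlinarith [Real.sqrt_nonneg (8 * Real.log 2 / ε), hsq, hNbB]
    have h3 := (div_le_iff₀ hε0).mp h2
    linarith [h3, sq_nonneg (Nv * B), (by ring : (Nv * B) ^ 2 * ε = ε * (Nv ^ 2 * B ^ 2))]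
  have hα8 : 8 * |α| ≤ ε * Nv := by
    have h1 : 8 * |α| / ε ≤ Nv := by linarith
    have h2 := (div_le_iff₀ hε0).mp h1
    linarith
  have hαN : -(ε * Nv ^ 2 / 8) ≤ α * Nv := by
    nlinarith [mul_le_mul_of_nonneg_right hα8 hNpos.le,
      mul_le_mul_of_nonneg_right (neg_abs_le α) hNpos.le]
  have hαN2 : -(ε * Nv ^ 2 / 8) ≤ α * Nv * (1 - ε / 2) := by
    nlinarith [mul_nonneg (by linarith : (0:ℝ) ≤ 1 - ε / 2)
      (by linarith : (0:ℝ) ≤ α * Nv + ε * Nv ^ 2 / 8),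
      mul_nonneg (mul_nonneg hε0.le hε0.le) (sq_nonneg Nv)]
  have hbr : B ^ 2 * (-(ε * Nv ^ 2 / 8)) ≤ B ^ 2 * (α * Nv * (1 - ε / 2)) :=
    mul_le_mul_of_nonneg_left hαN2 (sq_nonneg B)
  have hmain : Real.log 2 + Nv * (Nv + α) * (-(B ^ 2) * (1 - ε / 2) / 2) ≤
      -(1 / 2) * Nv ^ 2 * B ^ 2 * (1 - ε) := by linarith [hNB2, hbr, hlog2]
  linarith [hq, hmain]


private lemma rmt_aux_NB_tendsto (b : ℕ → ℝ)
    (hbinf : Tendsto (fun N : ℕ => (N : ℝ) * b N / Real.sqrt (Real.log N)) atTop atTop) :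
    Tendsto (fun N : ℕ => (N : ℝ) * b N) atTop atTop := by
  rw [tendsto_atTop]
  intro C
  filter_upwards [hbinf.eventually_ge_atTop (max C 0), eventually_ge_atTop 3] with N h1 h2
  have hN3 : (3 : ℝ) ≤ (N : ℝ) := by exact_mod_cast h2
  have hNpos : (0 : ℝ) < (N : ℝ) := by linarith
  have hlog : 1 ≤ Real.log N := by
    rw [Real.le_log_iff_exp_le hNpos]
    have := Real.exp_one_lt_d9
    linarith
  have hsq1 : 1 ≤ Real.sqrt (Real.log N) := by
    rw [show (1 : ℝ) = Real.sqrt 1 by simp]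
    exact Real.sqrt_le_sqrt hlog
  have hsq0 : 0 < Real.sqrt (Real.log N) := by linarith
  have h3 : max C 0 * Real.sqrt (Real.log N) ≤ (N : ℝ) * b N := (le_div_iff₀ hsq0).mp h1
  calc C ≤ max C 0 := le_max_left _ _
    _ ≤ max C 0 * Real.sqrt (Real.log N) := le_mul_of_one_le_right (le_max_right _ _) hsq1
    _ ≤ (N : ℝ) * b N := h3


/-- concentration of the Gamma-distributed trace variable in a shrinking
window around 1. -/
theorem gamma_trace_concentration (α : ℝ) (hα : -1 < α) (b : ℕ → ℝ)
    (hb : ∀ N, 0 < b N ∧ b N < 1)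
    (hb0 : Tendsto b atTop (𝓝 0))
    (hbinf : Tendsto (fun N : ℕ => (N : ℝ) * b N / Real.sqrt (Real.log N)) atTop atTop) :
    ∀ ε ∈ Set.Ioo (0 : ℝ) 1, ∃ N₀ : ℕ, ∀ N : ℕ, N₀ ≤ N →
      (∫ u in Set.Ioc (0 : ℝ) (1 - b N),
          (N : ℝ) * ((N : ℝ) + α) * gammaDens α N ((N : ℝ) * ((N : ℝ) + α) * u)) +
        (∫ u in Set.Ioi (1 + b N),
          (N : ℝ) * ((N : ℝ) + α) * gammaDens α N ((N : ℝ) * ((N : ℝ) + α) * u)) ≤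
      Real.exp (-(1 / 2) * (N : ℝ) ^ 2 * b N ^ 2 * (1 - ε)) := by
  rintro ε ⟨hε0, hε1⟩
  have hNb := rmt_aux_NB_tendsto b hbinf
  have hδpos : (0 : ℝ) < ε / 2 / (1 + ε / 2) := div_pos (by linarith) (by linarith)
  have Eb := hb0.eventually_lt_const hδpos
  have ENα : ∀ᶠ N : ℕ in atTop, 8 * |α| / ε + 1 ≤ (N : ℝ) :=
    tendsto_natCast_atTop_atTop.eventually_ge_atTop _
  have ENb : ∀ᶠ N : ℕ in atTop, Real.sqrt (8 * Real.log 2 / ε) ≤ (N : ℝ) * b N :=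
    hNb.eventually_ge_atTop _
  obtain ⟨N₀, hN₀⟩ := eventually_atTop.mp (Eb.and (ENα.and ENb))
  refine ⟨N₀, fun N hN => ?_⟩
  obtain ⟨hbδ, hNα, hNbB⟩ := hN₀ N hN
  obtain ⟨hb1, hb2⟩ := hb N
  have hN1 : (1 : ℝ) ≤ (N : ℝ) := by
    have h8 : (0 : ℝ) ≤ 8 * |α| / ε := by positivity
    linarith
  have hNpos : (0 : ℝ) < (N : ℝ) := by linarith
  have hk : (0 : ℝ) < (N : ℝ) * ((N : ℝ) + α) := mul_pos hNpos (by linarith)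
  have hT1 : (∫ u in Set.Ioc (0 : ℝ) (1 - b N),
        (N : ℝ) * ((N : ℝ) + α) * gammaDens α N ((N : ℝ) * ((N : ℝ) + α) * u)) ≤
      Real.exp (b N * ((N : ℝ) * ((N : ℝ) + α)) * (1 - b N)) * (1 + b N) ^
        (-((N : ℝ) * ((N : ℝ) + α))) := by
    refine tail_bound α N hk (by linarith : (0:ℝ) < 1 + b N) (Real.exp_nonneg _)
      measurableSet_Ioc (fun u hu => hu.1) ?_
    intro u hu
    rw [← Real.exp_add]
    exact Real.exp_le_exp.mpr (rmt_pt1 hk hb1 hu.2)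
  have hT2 : (∫ u in Set.Ioi (1 + b N),
        (N : ℝ) * ((N : ℝ) + α) * gammaDens α N ((N : ℝ) * ((N : ℝ) + α) * u)) ≤
      Real.exp (-(b N * ((N : ℝ) * ((N : ℝ) + α)) * (1 + b N))) * (1 - b N) ^
        (-((N : ℝ) * ((N : ℝ) + α))) := by
    refine tail_bound α N hk (by linarith : (0:ℝ) < 1 - b N) (Real.exp_nonneg _)
      measurableSet_Ioi (fun u hu => by simp only [Set.mem_Ioi] at hu ⊢; linarith) ?_
    intro u hu
    simp only [Set.mem_Ioi] at hu
    rw [← Real.exp_add]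
    exact Real.exp_le_exp.mpr (rmt_pt2 hk hb1 hu.le)
  have hE1 : Real.exp (b N * ((N : ℝ) * ((N : ℝ) + α)) * (1 - b N)) * (1 + b N) ^
        (-((N : ℝ) * ((N : ℝ) + α))) ≤
      Real.exp ((N : ℝ) * ((N : ℝ) + α) * (b N ^ 2 / (2 * (1 - b N)) - b N ^ 2)) := by
    rw [Real.rpow_def_of_pos (by linarith : (0:ℝ) < 1 + b N), ← Real.exp_add]
    exact Real.exp_le_exp.mpr (rmt_E1exp hk hb1 hb2)
  have hE2 : Real.exp (-(b N * ((N : ℝ) * ((N : ℝ) + α)) * (1 + b N))) * (1 - b N) ^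
        (-((N : ℝ) * ((N : ℝ) + α))) ≤
      Real.exp ((N : ℝ) * ((N : ℝ) + α) * (b N ^ 2 / (2 * (1 - b N)) - b N ^ 2)) := by
    rw [Real.rpow_def_of_pos (by linarith : (0:ℝ) < 1 - b N), ← Real.exp_add]
    exact Real.exp_le_exp.mpr (rmt_E2exp hk hb1 hb2)
  have hfinal := rmt_final_exponent hα hε0 hε1 hb1 hb2 hN1 hbδ hNbB hNα
  calc (∫ u in Set.Ioc (0 : ℝ) (1 - b N),
          (N : ℝ) * ((N : ℝ) + α) * gammaDens α N ((N : ℝ) * ((N : ℝ) + α) * u)) +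
        (∫ u in Set.Ioi (1 + b N),
          (N : ℝ) * ((N : ℝ) + α) * gammaDens α N ((N : ℝ) * ((N : ℝ) + α) * u))
      ≤ Real.exp ((N : ℝ) * ((N : ℝ) + α) * (b N ^ 2 / (2 * (1 - b N)) - b N ^ 2)) +
        Real.exp ((N : ℝ) * ((N : ℝ) + α) * (b N ^ 2 / (2 * (1 - b N)) - b N ^ 2)) :=
        add_le_add (hT1.trans hE1) (hT2.trans hE2)
    _ = Real.exp (Real.log 2 +
          (N : ℝ) * ((N : ℝ) + α) * (b N ^ 2 / (2 * (1 - b N)) - b N ^ 2)) := by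
        rw [Real.exp_add, Real.exp_log two_pos]; ring
    _ ≤ Real.exp (-(1 / 2) * (N : ℝ) ^ 2 * b N ^ 2 * (1 - ε)) := Real.exp_le_exp.mpr hfinal

end RMT
end
end
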